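/- In the full observation model, fix i ∈ {1,…,n} and fix arbitrarily the control strategies g^{-i} of all control stations except station i. Then restricting attention at station i to control laws of the form U^i_t = g^i_t(X^i_t, Z_{1:t}, U_{1:t-1}) is without loss of optimality: for every strategy g^i of the general form U^i_t = g^i_t(Z_{1:t}, X^i_{1:t}, U_{1:t-1}) there exists a strategy ĝ^i whose laws depend only on (X^i_t, Z_{1:t}, U_{1:t-1}) with J(ĝ^i, g^{-i}) ≤ J(g^i, g^{-i}). -/

import Mathlib

open scoped Classical

namespace ControlSharing

variable {n T : ℕ}
variable {Z : Type} [Fintype Z] [Nonempty Z]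
variable {X : Fin n → Type} [∀ i, Fintype (X i)] [∀ i, Nonempty (X i)]
variable {U : Fin n → Type} [∀ i, Fintype (U i)] [∀ i, Nonempty (U i)]
variable {W0 : Type} [Fintype W0] [Nonempty W0]
variable {W : Fin n → Type} [∀ i, Fintype (W i)] [∀ i, Nonempty (W i)]

/-- A probability weight function on a finite type. -/
def IsLaw {α : Type} [Fintype α] (P : α → ℝ) : Prop :=
  (∀ a, 0 ≤ P a) ∧ ∑ a, P a = 1

/-- Sample space of primitive random variables: the initial shared state `Z₁`, the initial
local states `X₁ⁱ`, the shared-dynamics noises `W⁰_t` and the local noises `Wⁱ_t`. -/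
abbrev Omega (T : ℕ) (Z : Type) (X : Fin n → Type) (W0 : Type) (W : Fin n → Type) : Type :=
  Z × (∀ i, X i) × (Fin T → W0) × (∀ i, Fin T → W i)

/-- The probability weight of a sample point: `Z₁ ~ P_Z`; conditionally on `Z₁` the initial
local states are independent, `X₁ⁱ ~ P_{Xⁱ|Z}(·|Z₁)`; all noises are independent with laws
`P_{W⁰}`, `P_{Wⁱ}`, independent of the initial states. -/
noncomputable def weight (PZ : Z → ℝ) (PX : ∀ i, Z → X i → ℝ) (PW0 : W0 → ℝ)
    (PW : ∀ i, W i → ℝ) (ω : Omega T Z X W0 W) : ℝ :=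
  PZ ω.1 * (∏ i, PX i ω.1 (ω.2.1 i)) * (∏ t, PW0 (ω.2.2.1 t)) *
    (∏ i, ∏ t, PW i (ω.2.2.2 i t))

/-- A general control strategy: station `i` chooses `Uⁱ_t = gⁱ_t(Z_{1:t}, Xⁱ_{1:t}, U_{1:t-1})`. -/
def Strategy (Z : Type) (X U : Fin n → Type) : Type :=
  ∀ (i : Fin n) (t : ℕ), (Fin (t + 1) → Z) → (Fin (t + 1) → X i) →
    (Fin t → ∀ j, U j) → U i

variable (f0 : ℕ → Z → (∀ j, U j) → W0 → Z)
variable (f : ∀ i, ℕ → Z → X i → (∀ j, U j) → W i → X i)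

/-- The closed-loop trajectory: histories `(Z_{1:t+1}, X_{1:t+1}, U_{1:t+1})` generated by the
dynamics `Z_{t+1} = f⁰_t(Z_t, U_t, W⁰_t)`, `Xⁱ_{t+1} = fⁱ_t(Z_t, Xⁱ_t, U_t, Wⁱ_t)` and the
strategy `g`. -/
noncomputable def traj (g : Strategy Z X U) (ω : Omega T Z X W0 W) :
    (t : ℕ) → (Fin (t + 1) → Z) × (∀ i, Fin (t + 1) → X i) × (Fin (t + 1) → ∀ j, U j)
  | 0 =>
    let zh : Fin 1 → Z := fun _ => ω.1
    let xh : ∀ i, Fin 1 → X i := fun i _ => ω.2.1 i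
    ⟨zh, xh, fun _ j => g j 0 zh (xh j) (fun s => s.elim0)⟩
  | t + 1 =>
    let prev := traj g ω t
    let ucur := prev.2.2 (Fin.last t)
    let znew := f0 t (prev.1 (Fin.last t)) ucur
      (if h : t < T then ω.2.2.1 ⟨t, h⟩ else Classical.arbitrary W0)
    let xnew : ∀ i, X i := fun i =>
      f i t (prev.1 (Fin.last t)) (prev.2.1 i (Fin.last t)) ucur
        (if h : t < T then ω.2.2.2 i ⟨t, h⟩ else Classical.arbitrary (W i))
    let zh : Fin (t + 2) → Z := Fin.snoc prev.1 znew
    let xh : ∀ i, Fin (t + 2) → X i := fun i => Fin.snoc (prev.2.1 i) (xnew i)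
    ⟨zh, xh, Fin.snoc prev.2.2 (fun j => g j (t + 1) zh (xh j) prev.2.2)⟩

/-- The shared state process `Z_t`. -/
noncomputable def Zp (g : Strategy Z X U) (t : ℕ) (ω : Omega T Z X W0 W) : Z :=
  (traj f0 f g ω t).1 (Fin.last t)

/-- The local state process `Xⁱ_t`. -/
noncomputable def Xp (g : Strategy Z X U) (i : Fin n) (t : ℕ) (ω : Omega T Z X W0 W) : X i :=
  (traj f0 f g ω t).2.1 i (Fin.last t)

/-- The action process `Uⁱ_t`. -/
noncomputable def Up (g : Strategy Z X U) (i : Fin n) (t : ℕ) (ω : Omega T Z X W0 W) : U i :=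
  (traj f0 f g ω t).2.2 (Fin.last t) i

/-- Probability of an event under a weight function. -/
noncomputable def Pr {Ω : Type} [Fintype Ω] (μ : Ω → ℝ) (A : Ω → Prop) : ℝ :=
  ∑ ω : Ω, if A ω then μ ω else 0

/-- Conditional probability `P(A | B)`. -/
noncomputable def CondPr {Ω : Type} [Fintype Ω] (μ : Ω → ℝ) (A B : Ω → Prop) : ℝ :=
  Pr μ (fun ω => A ω ∧ B ω) / Pr μ B

/-- Conditional expectation `E[h | B]`. -/
noncomputable def CondExp {Ω : Type} [Fintype Ω] (μ : Ω → ℝ) (h : Ω → ℝ) (B : Ω → Prop) : ℝ :=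
  (∑ ω : Ω, if B ω then μ ω * h ω else 0) / Pr μ B

/-- The expected total cost `J(g) = E[∑_{t=1}^T c_t(Z_t, X_t, U_t)]`. -/
noncomputable def J (c : ℕ → Z → (∀ i, X i) → (∀ i, U i) → ℝ)
    (μ : Omega T Z X W0 W → ℝ) (g : Strategy Z X U) : ℝ :=
  ∑ ω : Omega T Z X W0 W, μ ω *
    ∑ t ∈ Finset.range T,
      c t (Zp f0 f g t ω) (fun i => Xp f0 f g i t ω) (fun i => Up f0 f g i t ω)


section Aux
set_option linter.unusedSectionVars false

variable {n T : ℕ}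
variable {Z : Type} [Fintype Z] [Nonempty Z]
variable {X : Fin n → Type} [∀ i, Fintype (X i)] [∀ i, Nonempty (X i)]
variable {U : Fin n → Type} [∀ i, Fintype (U i)] [∀ i, Nonempty (U i)]
variable {W0 : Type} [Fintype W0] [Nonempty W0]
variable {W : Fin n → Type} [∀ i, Fintype (W i)] [∀ i, Nonempty (W i)]
variable (f0 : ℕ → Z → (∀ j, U j) → W0 → Z)
variable (f : ∀ i, ℕ → Z → X i → (∀ j, U j) → W i → X i)

/-- Guarded shared-noise access. -/
noncomputable def W0at (ω : Omega T Z X W0 W) (t : ℕ) : W0 :=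
  if h : t < T then ω.2.2.1 ⟨t, h⟩ else Classical.arbitrary W0

/-- Guarded local-noise access. -/
noncomputable def Wat (j : Fin n) (ω : Omega T Z X W0 W) (t : ℕ) : W j :=
  if h : t < T then ω.2.2.2 j ⟨t, h⟩ else Classical.arbitrary (W j)

lemma traj_comp (g : Strategy Z X U) (ω : Omega T Z X W0 W) :
    ∀ (t : ℕ) (p : Fin (t + 1)),
      (traj f0 f g ω t).1 p = Zp f0 f g p ω ∧
      (∀ j, (traj f0 f g ω t).2.1 j p = Xp f0 f g j p ω) ∧
      ((traj f0 f g ω t).2.2 p = fun j => Up f0 f g j p ω) := by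
  intro t
  induction t with
  | zero =>
    intro p
    have hp : p = 0 := Fin.ext (by omega)
    subst hp
    refine ⟨rfl, fun j => rfl, ?_⟩
    funext j; rfl
  | succ t ih =>
    intro p
    refine Fin.lastCases ?_ ?_ p
    · exact ⟨rfl, fun j => rfl, funext fun j => rfl⟩
    · intro q
      have h1 : (traj f0 f g ω (t+1)).1 q.castSucc = (traj f0 f g ω t).1 q := by
        simp [traj, Fin.snoc_castSucc]
      have h2 : ∀ j, (traj f0 f g ω (t+1)).2.1 j q.castSucc = (traj f0 f g ω t).2.1 j q := by
        intro j; simp [traj, Fin.snoc_castSucc]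
      have h3 : (traj f0 f g ω (t+1)).2.2 q.castSucc = (traj f0 f g ω t).2.2 q := by
        simp [traj, Fin.snoc_castSucc]
      rcases ih q with ⟨ihz, ihx, ihu⟩
      refine ⟨?_, fun j => ?_, ?_⟩
      · rw [h1, ihz]; rfl
      · rw [h2, ihx]; rfl
      · rw [h3, ihu]; rfl

lemma Zp_zero (g : Strategy Z X U) (ω : Omega T Z X W0 W) : Zp f0 f g 0 ω = ω.1 := rfl

lemma Xp_zero (g : Strategy Z X U) (j : Fin n) (ω : Omega T Z X W0 W) :
    Xp f0 f g j 0 ω = ω.2.1 j := rfl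

lemma Zp_succ (g : Strategy Z X U) (t : ℕ) (ω : Omega T Z X W0 W) :
    Zp f0 f g (t + 1) ω =
      f0 t (Zp f0 f g t ω) (fun j => Up f0 f g j t ω) (W0at ω t) := by
  show (traj f0 f g ω (t+1)).1 (Fin.last (t+1)) = _
  have : (traj f0 f g ω (t+1)).1 (Fin.last (t+1)) =
      f0 t ((traj f0 f g ω t).1 (Fin.last t)) ((traj f0 f g ω t).2.2 (Fin.last t)) (W0at ω t) := by
    simp [traj, Fin.snoc_last, W0at]
  rw [this]
  rcases traj_comp f0 f g ω t (Fin.last t) with ⟨hz, _, hu⟩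
  rw [hz, hu]
  rfl

lemma Xp_succ (g : Strategy Z X U) (j : Fin n) (t : ℕ) (ω : Omega T Z X W0 W) :
    Xp f0 f g j (t + 1) ω =
      f j t (Zp f0 f g t ω) (Xp f0 f g j t ω) (fun j' => Up f0 f g j' t ω) (Wat j ω t) := by
  show (traj f0 f g ω (t+1)).2.1 j (Fin.last (t+1)) = _
  have : (traj f0 f g ω (t+1)).2.1 j (Fin.last (t+1)) =
      f j t ((traj f0 f g ω t).1 (Fin.last t)) ((traj f0 f g ω t).2.1 j (Fin.last t))
        ((traj f0 f g ω t).2.2 (Fin.last t)) (Wat j ω t) := by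
    simp [traj, Fin.snoc_last, Wat]
  rw [this]
  rcases traj_comp f0 f g ω t (Fin.last t) with ⟨hz, hx, hu⟩
  rw [hz, hx, hu]
  rfl

lemma Up_eq (g : Strategy Z X U) (j : Fin n) (t : ℕ) (ω : Omega T Z X W0 W) :
    Up f0 f g j t ω =
      g j t (fun s : Fin (t+1) => Zp f0 f g s ω) (fun s : Fin (t+1) => Xp f0 f g j s ω)
        (fun (s : Fin t) j' => Up f0 f g j' s ω) := by
  cases t with
  | zero =>
    show (traj f0 f g ω 0).2.2 (Fin.last 0) j = _
    have h0 : (traj f0 f g ω 0).2.2 (Fin.last 0) j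
        = g j 0 (fun _ => ω.1) (fun _ => ω.2.1 j) (fun s => s.elim0) := rfl
    rw [h0]
    have e1 : (fun s : Fin 1 => Zp f0 f g (s : ℕ) ω) = fun _ => ω.1 := by
      funext s
      have hs : (s : ℕ) = 0 := by omega
      rw [hs]; rfl
    have e2 : (fun s : Fin 1 => Xp f0 f g j (s : ℕ) ω) = fun _ => ω.2.1 j := by
      funext s
      have hs : (s : ℕ) = 0 := by omega
      rw [hs]; rfl
    have e3 : (fun (s : Fin 0) (j' : Fin n) => Up f0 f g j' (s : ℕ) ω)
        = fun s => s.elim0 := by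
      funext s; exact s.elim0
    rw [e1, e2, e3]
  | succ t =>
    show (traj f0 f g ω (t+1)).2.2 (Fin.last (t+1)) j = _
    have h0 : (traj f0 f g ω (t+1)).2.2 (Fin.last (t+1)) j
        = g j (t+1) (traj f0 f g ω (t+1)).1 ((traj f0 f g ω (t+1)).2.1 j)
            (traj f0 f g ω t).2.2 := by
      simp [traj, Fin.snoc_last]
    rw [h0]
    congr 1
    · funext s; exact (traj_comp f0 f g ω (t+1) s).1
    · funext s; exact (traj_comp f0 f g ω (t+1) s).2.1 j
    · funext s j'
      have := (traj_comp f0 f g ω t s).2.2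
      exact congrFun this j'

end Aux
section Aux2
set_option linter.unusedSectionVars false

variable {n T : ℕ}
variable {Z : Type} [Fintype Z] [Nonempty Z]
variable {X : Fin n → Type} [∀ i, Fintype (X i)] [∀ i, Nonempty (X i)]
variable {U : Fin n → Type} [∀ i, Fintype (U i)] [∀ i, Nonempty (U i)]
variable {W0 : Type} [Fintype W0] [Nonempty W0]
variable {W : Fin n → Type} [∀ i, Fintype (W i)] [∀ i, Nonempty (W i)]
variable (f0 : ℕ → Z → (∀ j, U j) → W0 → Z)
variable (f : ∀ i, ℕ → Z → X i → (∀ j, U j) → W i → X i)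

/-- Memorylessness of the law of station `i` at time `s`. -/
def MLat (E : Strategy Z X U) (i : Fin n) (s : ℕ) : Prop :=
  ∀ (zh : Fin (s+1) → Z) (xh xh' : Fin (s+1) → X i) (uh : Fin s → ∀ j, U j),
    xh (Fin.last s) = xh' (Fin.last s) → E i s zh xh uh = E i s zh xh' uh

/-- If shared/past data agree, the action of station `j` agrees (same strategy, two sample
points, possibly two strategies with the same law at time `t`). -/
lemma Up_congr (E E' : Strategy Z X U) (j : Fin n) (t : ℕ) (ω ω' : Omega T Z X W0 W)
    (hlaw : E j t = E' j t)
    (hz : ∀ s ≤ t, Zp f0 f E s ω = Zp f0 f E' s ω')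
    (hx : ∀ s ≤ t, Xp f0 f E j s ω = Xp f0 f E' j s ω')
    (hu : ∀ s < t, ∀ j', Up f0 f E j' s ω = Up f0 f E' j' s ω') :
    Up f0 f E j t ω = Up f0 f E' j t ω' := by
  rw [Up_eq, Up_eq, ← hlaw]
  have e1 : (fun s : Fin (t+1) => Zp f0 f E (s : ℕ) ω)
      = fun s : Fin (t+1) => Zp f0 f E' (s : ℕ) ω' := by
    funext p; exact hz p (by omega)
  have e2 : (fun s : Fin (t+1) => Xp f0 f E j (s : ℕ) ω)
      = fun s : Fin (t+1) => Xp f0 f E' j (s : ℕ) ω' := by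
    funext p; exact hx p (by omega)
  have e3 : (fun (s : Fin t) (j' : Fin n) => Up f0 f E j' (s : ℕ) ω)
      = fun (s : Fin t) (j' : Fin n) => Up f0 f E' j' (s : ℕ) ω' := by
    funext p j'; exact hu p (by omega) j'
  rw [e1, e2, e3]

/-- Same, for station `i` with a memoryless law: only the current local state must agree. -/
lemma Up_congr_ML (E E' : Strategy Z X U) (i : Fin n) (t : ℕ) (ω ω' : Omega T Z X W0 W)
    (hlaw : E i t = E' i t) (hml : MLat E i t)
    (hz : ∀ s ≤ t, Zp f0 f E s ω = Zp f0 f E' s ω')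
    (hxl : Xp f0 f E i t ω = Xp f0 f E' i t ω')
    (hu : ∀ s < t, ∀ j', Up f0 f E j' s ω = Up f0 f E' j' s ω') :
    Up f0 f E i t ω = Up f0 f E' i t ω' := by
  rw [Up_eq, Up_eq, ← hlaw]
  have e1 : (fun s : Fin (t+1) => Zp f0 f E (s : ℕ) ω)
      = fun s : Fin (t+1) => Zp f0 f E' (s : ℕ) ω' := by
    funext p; exact hz p (by omega)
  have e3 : (fun (s : Fin t) (j' : Fin n) => Up f0 f E j' (s : ℕ) ω)
      = fun (s : Fin t) (j' : Fin n) => Up f0 f E' j' (s : ℕ) ω' := by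
    funext p j'; exact hu p (by omega) j'
  rw [e1, e3]
  apply hml
  show Xp f0 f E i ((Fin.last t : Fin (t+1)) : ℕ) ω = Xp f0 f E' i ((Fin.last t : Fin (t+1)) : ℕ) ω'
  have : ((Fin.last t : Fin (t+1)) : ℕ) = t := rfl
  rw [this]
  exact hxl

/-- Processes depend only on the laws at earlier (resp. not later) times. -/
lemma congr_laws (G H : Strategy Z X U) (ω : Omega T Z X W0 W) :
    ∀ t : ℕ,
      ((∀ (j : Fin n) (s : ℕ), s < t → G j s = H j s) →
        ∀ s ≤ t, Zp f0 f G s ω = Zp f0 f H s ω ∧ ∀ j, Xp f0 f G j s ω = Xp f0 f H j s ω) ∧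
      ((∀ (j : Fin n) (s : ℕ), s ≤ t → G j s = H j s) →
        ∀ s ≤ t, ∀ j, Up f0 f G j s ω = Up f0 f H j s ω) := by
  intro t
  induction t with
  | zero =>
    constructor
    · intro _ s hs
      have hs0 : s = 0 := Nat.le_zero.mp hs
      subst hs0
      exact ⟨rfl, fun j => rfl⟩
    · intro hag s hs j
      have hs0 : s = 0 := Nat.le_zero.mp hs
      subst hs0
      exact Up_congr f0 f G H j 0 ω ω (hag j 0 le_rfl)
        (fun s hs => by have : s = 0 := Nat.le_zero.mp hs; subst this; rfl)
        (fun s hs => by have : s = 0 := Nat.le_zero.mp hs; subst this; rfl)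
        (fun s hs => by omega)
  | succ t ih =>
    have P1 : (∀ (j : Fin n) (s : ℕ), s < t + 1 → G j s = H j s) →
        ∀ s ≤ t + 1, Zp f0 f G s ω = Zp f0 f H s ω ∧ ∀ j, Xp f0 f G j s ω = Xp f0 f H j s ω := by
      intro hag s hs
      rcases Nat.lt_or_ge s (t+1) with h | h
      · exact ih.1 (fun j s' hs' => hag j s' (by omega)) s (by omega)
      · have hst : s = t + 1 := by omega
        subst hst
        have hZ := (ih.1 (fun j s' hs' => hag j s' (by omega)) t le_rfl).1
        have hX := (ih.1 (fun j s' hs' => hag j s' (by omega)) t le_rfl).2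
        have hU : ∀ j, Up f0 f G j t ω = Up f0 f H j t ω :=
          ih.2 (fun j s' hs' => hag j s' (by omega)) t le_rfl
        have hUf : (fun j => Up f0 f G j t ω) = fun j => Up f0 f H j t ω := funext hU
        constructor
        · rw [Zp_succ, Zp_succ, hZ, hUf]
        · intro j; rw [Xp_succ, Xp_succ, hZ, hX j, hUf]
    refine ⟨P1, ?_⟩
    intro hag s hs j
    rcases Nat.lt_or_ge s (t+1) with h | h
    · exact ih.2 (fun j' s' hs' => hag j' s' (by omega)) s (by omega) j
    · have hst : s = t + 1 := by omega
      subst hst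
      have hP1 := P1 (fun j' s' hs' => hag j' s' (le_of_lt hs'))
      exact Up_congr f0 f G H j (t+1) ω ω (hag j (t+1) le_rfl)
        (fun s' hs' => (hP1 s' hs').1)
        (fun s' hs' => (hP1 s' hs').2 j)
        (fun s' hs' j' => ih.2 (fun j'' s'' hs'' => hag j'' s'' (by omega)) s' (by omega) j')

end Aux2
section Aux3
set_option linter.unusedSectionVars false

variable {n T : ℕ}
variable {Z : Type} [Fintype Z] [Nonempty Z]
variable {X : Fin n → Type} [∀ i, Fintype (X i)] [∀ i, Nonempty (X i)]
variable {U : Fin n → Type} [∀ i, Fintype (U i)] [∀ i, Nonempty (U i)]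
variable {W0 : Type} [Fintype W0] [Nonempty W0]
variable {W : Fin n → Type} [∀ i, Fintype (W i)] [∀ i, Nonempty (W i)]
variable (f0 : ℕ → Z → (∀ j, U j) → W0 → Z)
variable (f : ∀ i, ℕ → Z → X i → (∀ j, U j) → W i → X i)

/-- If two strategies differ only in the law of station `i` at time `τ`, and at `ω` that law
produces the same action on the realized history, then all processes at `ω` coincide. -/
lemma congr_point (G H : Strategy Z X U) (i : Fin n) (τ : ℕ) (ω : Omega T Z X W0 W)
    (hoff : ∀ (j : Fin n) (s : ℕ), ¬(j = i ∧ s = τ) → G j s = H j s)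
    (hpt : G i τ (fun s : Fin (τ+1) => Zp f0 f G (s : ℕ) ω)
        (fun s : Fin (τ+1) => Xp f0 f G i (s : ℕ) ω)
        (fun (s : Fin τ) j' => Up f0 f G j' (s : ℕ) ω)
      = H i τ (fun s : Fin (τ+1) => Zp f0 f G (s : ℕ) ω)
        (fun s : Fin (τ+1) => Xp f0 f G i (s : ℕ) ω)
        (fun (s : Fin τ) j' => Up f0 f G j' (s : ℕ) ω)) :
    ∀ t : ℕ, (∀ s ≤ t, Zp f0 f G s ω = Zp f0 f H s ω ∧ (∀ j, Xp f0 f G j s ω = Xp f0 f H j s ω))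
      ∧ (∀ s ≤ t, ∀ j, Up f0 f G j s ω = Up f0 f H j s ω) := by
  intro t
  induction t with
  | zero =>
    have hZX : ∀ s ≤ 0, Zp f0 f G s ω = Zp f0 f H s ω ∧
        (∀ j, Xp f0 f G j s ω = Xp f0 f H j s ω) := by
      intro s hs
      have hs0 : s = 0 := Nat.le_zero.mp hs
      subst hs0
      exact ⟨rfl, fun j => rfl⟩
    refine ⟨hZX, ?_⟩
    intro s hs j
    have hs0 : s = 0 := Nat.le_zero.mp hs
    subst hs0
    by_cases hc : j = i ∧ 0 = τ
    · rcases hc with ⟨hj, hτ⟩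
      subst hj
      -- use hpt, with τ = 0
      -- Up G j 0 ω = G j 0 (realized) = H j 0 (realized) = Up H j 0 ω
      have h1 : Up f0 f G j 0 ω = G j 0 (fun s : Fin 1 => Zp f0 f G (s : ℕ) ω)
          (fun s : Fin 1 => Xp f0 f G j (s : ℕ) ω)
          (fun (s : Fin 0) j' => Up f0 f G j' (s : ℕ) ω) := Up_eq f0 f G j 0 ω
      have h2 : Up f0 f H j 0 ω = H j 0 (fun s : Fin 1 => Zp f0 f H (s : ℕ) ω)
          (fun s : Fin 1 => Xp f0 f H j (s : ℕ) ω)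
          (fun (s : Fin 0) j' => Up f0 f H j' (s : ℕ) ω) := Up_eq f0 f H j 0 ω
      have e1 : (fun s : Fin 1 => Zp f0 f H (s : ℕ) ω)
          = fun s : Fin 1 => Zp f0 f G (s : ℕ) ω := by
        funext p
        have hp : (p : ℕ) = 0 := by omega
        rw [hp]; rfl
      have e2 : (fun s : Fin 1 => Xp f0 f H j (s : ℕ) ω)
          = fun s : Fin 1 => Xp f0 f G j (s : ℕ) ω := by
        funext p
        have hp : (p : ℕ) = 0 := by omega
        rw [hp]; rfl
      have e3 : (fun (s : Fin 0) j' => Up f0 f H j' (s : ℕ) ω)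
          = fun (s : Fin 0) j' => Up f0 f G j' (s : ℕ) ω := by
        funext p; exact p.elim0
      rw [h1, h2, e1, e2, e3]
      subst hτ
      exact hpt
    · exact Up_congr f0 f G H j 0 ω ω (hoff j 0 hc)
        (fun s hs => (hZX s hs).1) (fun s hs => (hZX s hs).2 j) (fun s hs => by omega)
  | succ t ih =>
    have P1 : ∀ s ≤ t + 1, Zp f0 f G s ω = Zp f0 f H s ω ∧
        (∀ j, Xp f0 f G j s ω = Xp f0 f H j s ω) := by
      intro s hs
      rcases Nat.lt_or_ge s (t+1) with h | h
      · exact ih.1 s (by omega)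
      · have hst : s = t + 1 := by omega
        subst hst
        have hZ := (ih.1 t le_rfl).1
        have hX := (ih.1 t le_rfl).2
        have hUf : (fun j => Up f0 f G j t ω) = fun j => Up f0 f H j t ω :=
          funext (ih.2 t le_rfl)
        constructor
        · rw [Zp_succ, Zp_succ, hZ, hUf]
        · intro j; rw [Xp_succ, Xp_succ, hZ, hX j, hUf]
    refine ⟨P1, ?_⟩
    intro s hs j
    rcases Nat.lt_or_ge s (t+1) with h | h
    · exact ih.2 s (by omega) j
    · have hst : s = t + 1 := by omega
      subst hst
      by_cases hc : j = i ∧ t + 1 = τ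
      · rcases hc with ⟨hj, hτ⟩
        subst hj
        have h1 := Up_eq f0 f G j (t+1) ω
        have h2 := Up_eq f0 f H j (t+1) ω
        have e1 : (fun s : Fin (t+2) => Zp f0 f H (s : ℕ) ω)
            = fun s : Fin (t+2) => Zp f0 f G (s : ℕ) ω := by
          funext p; exact ((P1 p (by omega)).1).symm
        have e2 : (fun s : Fin (t+2) => Xp f0 f H j (s : ℕ) ω)
            = fun s : Fin (t+2) => Xp f0 f G j (s : ℕ) ω := by
          funext p; exact (((P1 p (by omega)).2) j).symm
        have e3 : (fun (s : Fin (t+1)) j' => Up f0 f H j' (s : ℕ) ω)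
            = fun (s : Fin (t+1)) j' => Up f0 f G j' (s : ℕ) ω := by
          funext p j'; exact (ih.2 p (by omega) j').symm
        rw [h1, h2, e1, e2, e3]
        subst hτ
        exact hpt
      · exact Up_congr f0 f G H j (t+1) ω ω (hoff j (t+1) hc)
          (fun s' hs' => (P1 s' hs').1) (fun s' hs' => (P1 s' hs').2 j)
          (fun s' hs' j' => ih.2 s' (by omega) j')

end Aux3
section Aux4
set_option linter.unusedSectionVars false

variable {n T : ℕ}
variable {Z : Type} [Fintype Z] [Nonempty Z]
variable {X : Fin n → Type} [∀ i, Fintype (X i)] [∀ i, Nonempty (X i)]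
variable {U : Fin n → Type} [∀ i, Fintype (U i)] [∀ i, Nonempty (U i)]
variable {W0 : Type} [Fintype W0] [Nonempty W0]
variable {W : Fin n → Type} [∀ i, Fintype (W i)] [∀ i, Nonempty (W i)]
variable (f0 : ℕ → Z → (∀ j, U j) → W0 → Z)
variable (f : ∀ i, ℕ → Z → X i → (∀ j, U j) → W i → X i)

/-- The central conditional-independence coupling: if two sample points agree on all
coordinates except station `i`'s initial state and pre-`τ` noises, and the realized shared /
action / current-local-state data up to time `τ` agree, then under any strategy whose station-`i`
laws are memoryless from time `τ` on, all processes agree from time `τ` on (and the shared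
state, other stations' states, and all actions agree at every time). -/
lemma congr_swap (E : Strategy Z X U) (i : Fin n) (τ : ℕ) (ω ω' : Omega T Z X W0 W)
    (hML : ∀ s, τ ≤ s → MLat E i s)
    (hx' : ∀ j, j ≠ i → ω.2.1 j = ω'.2.1 j)
    (hw0 : ω.2.2.1 = ω'.2.2.1)
    (hw' : ∀ j, j ≠ i → ω.2.2.2 j = ω'.2.2.2 j)
    (hwi : ∀ p : Fin T, τ ≤ (p : ℕ) → ω.2.2.2 i p = ω'.2.2.2 i p)
    (hzpast : ∀ s ≤ τ, Zp f0 f E s ω = Zp f0 f E s ω')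
    (hupast : ∀ s, s < τ → ∀ j, Up f0 f E j s ω = Up f0 f E j s ω')
    (hxi : Xp f0 f E i τ ω = Xp f0 f E i τ ω') :
    ∀ t : ℕ, ∀ s ≤ t,
      Zp f0 f E s ω = Zp f0 f E s ω'
      ∧ (∀ j, j ≠ i → Xp f0 f E j s ω = Xp f0 f E j s ω')
      ∧ (τ ≤ s → Xp f0 f E i s ω = Xp f0 f E i s ω')
      ∧ (∀ j, Up f0 f E j s ω = Up f0 f E j s ω') := by
  have hW0 : ∀ t, W0at ω t = W0at ω' t := by
    intro t; unfold W0at; rw [hw0]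
  have hWj : ∀ j, j ≠ i → ∀ t, Wat j ω t = Wat j ω' t := by
    intro j hj t; unfold Wat; rw [hw' j hj]
  have hWi : ∀ t, τ ≤ t → Wat i ω t = Wat i ω' t := by
    intro t ht; unfold Wat
    by_cases h : t < T
    · rw [dif_pos h, dif_pos h]; exact hwi ⟨t, h⟩ ht
    · rw [dif_neg h, dif_neg h]
  intro t
  induction t with
  | zero =>
    intro s hs
    have hs0 : s = 0 := Nat.le_zero.mp hs
    subst hs0
    have hZ0 : Zp f0 f E 0 ω = Zp f0 f E 0 ω' := hzpast 0 (Nat.zero_le τ)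
    refine ⟨hZ0, fun j hj => hx' j hj, ?_, ?_⟩
    · intro hτ0
      have hτ : τ = 0 := Nat.le_zero.mp hτ0
      exact hτ ▸ hxi
    · intro j
      rcases Nat.lt_or_ge 0 τ with h | h
      · exact hupast 0 h j
      · have hτ : τ = 0 := Nat.le_zero.mp h
        by_cases hj : j = i
        · subst hj
          exact Up_congr_ML f0 f E E j 0 ω ω' rfl (hML 0 (by omega))
            (fun s' hs' => by have : s' = 0 := Nat.le_zero.mp hs'; subst this; exact hZ0)
            (by have := hτ ▸ hxi; exact this)
            (fun s' hs' => by omega)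
        · exact Up_congr f0 f E E j 0 ω ω' rfl
            (fun s' hs' => by have : s' = 0 := Nat.le_zero.mp hs'; subst this; exact hZ0)
            (fun s' hs' => by have : s' = 0 := Nat.le_zero.mp hs'; subst this; exact hx' j hj)
            (fun s' hs' => by omega)
  | succ t ih =>
    intro s hs
    rcases Nat.lt_or_ge s (t+1) with h | h
    · exact ih s (by omega)
    have hst : s = t + 1 := by omega
    subst hst
    rcases ih t le_rfl with ⟨hZt, hXt, hXit, hUt⟩
    have hUtf : (fun j => Up f0 f E j t ω) = fun j => Up f0 f E j t ω' := funext hUt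
    -- shared state at t+1
    have hZ : Zp f0 f E (t+1) ω = Zp f0 f E (t+1) ω' := by
      rw [Zp_succ, Zp_succ, hZt, hUtf, hW0 t]
    -- other stations' states at t+1
    have hX : ∀ j, j ≠ i → Xp f0 f E j (t+1) ω = Xp f0 f E j (t+1) ω' := by
      intro j hj
      rw [Xp_succ, Xp_succ, hZt, hXt j hj, hUtf, hWj j hj t]
    -- station i's state at t+1, provided τ ≤ t+1
    have hXi : τ ≤ t + 1 → Xp f0 f E i (t+1) ω = Xp f0 f E i (t+1) ω' := by
      intro hτ
      rcases Nat.lt_or_ge t τ with h' | h'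
      · -- τ = t+1
        have hτ' : τ = t + 1 := by omega
        exact hτ' ▸ hxi
      · rw [Xp_succ, Xp_succ, hZt, hXit h', hUtf, hWi t h']
    refine ⟨hZ, hX, hXi, ?_⟩
    -- actions at t+1
    have hZle : ∀ s' ≤ t + 1, Zp f0 f E s' ω = Zp f0 f E s' ω' := by
      intro s' hs'
      rcases Nat.lt_or_ge s' (t+1) with h' | h'
      · exact (ih s' (by omega)).1
      · have : s' = t + 1 := by omega
        subst this; exact hZ
    have hUlt : ∀ s' < t + 1, ∀ j, Up f0 f E j s' ω = Up f0 f E j s' ω' := by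
      intro s' hs' j
      exact (ih s' (by omega)).2.2.2 j
    intro j
    rcases Nat.lt_or_ge (t+1) τ with h' | h'
    · exact hupast (t+1) h' j
    by_cases hj : j = i
    · subst hj
      exact Up_congr_ML f0 f E E j (t+1) ω ω' rfl (hML (t+1) h') hZle (hXi h') hUlt
    · refine Up_congr f0 f E E j (t+1) ω ω' rfl hZle ?_ hUlt
      intro s' hs'
      rcases Nat.lt_or_ge s' (t+1) with h'' | h''
      · exact (ih s' (by omega)).2.1 j hj
      · have : s' = t + 1 := by omega
        subst this; exact hX j hj

end Aux4
section Aux5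
set_option linter.unusedSectionVars false

variable {n T : ℕ}
variable {Z : Type} [Fintype Z] [Nonempty Z]
variable {X : Fin n → Type} [∀ i, Fintype (X i)] [∀ i, Nonempty (X i)]
variable {U : Fin n → Type} [∀ i, Fintype (U i)] [∀ i, Nonempty (U i)]
variable {W0 : Type} [Fintype W0] [Nonempty W0]
variable {W : Fin n → Type} [∀ i, Fintype (W i)] [∀ i, Nonempty (W i)]
variable (f0 : ℕ → Z → (∀ j, U j) → W0 → Z)
variable (f : ∀ i, ℕ → Z → X i → (∀ j, U j) → W i → X i)

/-- Type of the reduced information at time `τ`: shared-state history, station-`i` local-state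
history, and action history. -/
abbrev KeyT (Z : Type) (X : Fin n → Type) (U : Fin n → Type) (i : Fin n) (τ : ℕ) : Type :=
  (Fin (τ+1) → Z) × (Fin (τ+1) → X i) × (Fin τ → ∀ j, U j)

/-- The realized `(Z_{1:τ+1}, Xⁱ_{1:τ+1}, U_{1:τ})` history. -/
noncomputable def key (G : Strategy Z X U) (i : Fin n) (τ : ℕ) (ω : Omega T Z X W0 W) :
    KeyT Z X U i τ :=
  ⟨fun s => Zp f0 f G (s : ℕ) ω, fun s => Xp f0 f G i (s : ℕ) ω,
    fun s j => Up f0 f G j (s : ℕ) ω⟩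

variable {i : Fin n} {τ : ℕ}

/-- Clamped shared-state target history. -/
noncomputable def zc (k : KeyT Z X U i τ) (t : ℕ) : Z :=
  if h : t < τ + 1 then k.1 ⟨t, h⟩ else Classical.arbitrary Z

/-- Clamped action target history. -/
noncomputable def uc (k : KeyT Z X U i τ) (t : ℕ) : ∀ j, U j :=
  if h : t < τ then k.2.2 ⟨t, h⟩ else Classical.arbitrary _

/-- Guarded noise access (matching `Wat`/`W0at` but for bare noise functions). -/
noncomputable def Wc (j : Fin n) (w : Fin T → W j) (t : ℕ) : W j :=
  if h : t < T then w ⟨t, h⟩ else Classical.arbitrary (W j)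

noncomputable def Wc0 (w : Fin T → W0) (t : ℕ) : W0 :=
  if h : t < T then w ⟨t, h⟩ else Classical.arbitrary W0

/-- The forced local-state history of station `j`, driven by the target shared/action
histories in `k` and the primitive randomness `(x1, w)`. -/
noncomputable def fh (j : Fin n) (k : KeyT Z X U i τ) (x1 : X j) (w : Fin T → W j) :
    ℕ → X j
  | 0 => x1
  | t + 1 => f j t (zc k t) (fh j k x1 w t) (uc k t) (Wc j w t)

/-- Consistency of the shared-state targets with the noise `w0`. -/
def chi0 (k : KeyT Z X U i τ) (w0 : Fin T → W0) : Prop :=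
  ∀ s : Fin τ, f0 (s : ℕ) (zc k (s : ℕ)) (uc k (s : ℕ)) (Wc0 w0 (s : ℕ)) = k.1 s.succ

/-- Consistency of station `j`'s strategy with the action targets, along the forced history. -/
def chiU (G : Strategy Z X U) (j : Fin n) (k : KeyT Z X U i τ) (x1 : X j)
    (w : Fin T → W j) : Prop :=
  ∀ s : Fin τ,
    G j (s : ℕ) (fun p : Fin ((s : ℕ)+1) => zc k (p : ℕ))
      (fun p : Fin ((s : ℕ)+1) => fh f j k x1 w (p : ℕ))
      (fun p : Fin (s : ℕ) => uc k (p : ℕ)) = k.2.2 s j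

/-- The forced history of station `i` matches the target local-state history. -/
def chiX (k : KeyT Z X U i τ) (x1 : X i) (w : Fin T → W i) : Prop :=
  ∀ s : Fin (τ+1), fh f i k x1 w (s : ℕ) = k.2.1 s

lemma Wat_eq_Wc (j : Fin n) (ω : Omega T Z X W0 W) (t : ℕ) :
    Wat j ω t = Wc j (ω.2.2.2 j) t := rfl

lemma W0at_eq_Wc0 (ω : Omega T Z X W0 W) (t : ℕ) :
    W0at ω t = Wc0 ω.2.2.1 t := rfl

/-- The event `{key = k}` factorizes into per-coordinate-block conditions. -/
lemma key_eq_iff (G : Strategy Z X U) (ω : Omega T Z X W0 W) (k : KeyT Z X U i τ) :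
    key f0 f G i τ ω = k ↔
      (ω.1 = k.1 0 ∧ chi0 f0 k ω.2.2.1 ∧ (∀ j, chiU f G j k (ω.2.1 j) (ω.2.2.2 j)) ∧
        chiX f k (ω.2.1 i) (ω.2.2.2 i)) := by
  have hkey : key f0 f G i τ ω = k ↔
      ((∀ s : Fin (τ+1), Zp f0 f G (s : ℕ) ω = k.1 s) ∧
       (∀ s : Fin (τ+1), Xp f0 f G i (s : ℕ) ω = k.2.1 s) ∧
       (∀ (s : Fin τ) (j : Fin n), Up f0 f G j (s : ℕ) ω = k.2.2 s j)) := by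
    constructor
    · intro h
      subst h
      exact ⟨fun s => rfl, fun s => rfl, fun s j => rfl⟩
    · rintro ⟨h1, h2, h3⟩
      refine Prod.ext ?_ (Prod.ext ?_ ?_)
      · funext s; exact h1 s
      · funext s; exact h2 s
      · funext s; funext j; exact h3 s j
  rw [hkey]
  constructor
  · rintro ⟨h1, h2, h3⟩
    -- the forced histories agree with the realized ones
    have hforced : ∀ (j : Fin n), ∀ s ≤ τ,
        Xp f0 f G j s ω = fh f j k (ω.2.1 j) (ω.2.2.2 j) s := by
      intro j s
      induction s with
      | zero => intro _; rfl
      | succ s ihs =>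
        intro hsucc
        have hsτ : s < τ := by omega
        rw [Xp_succ, fh, ihs (by omega)]
        have hz : Zp f0 f G s ω = zc k s := by
          rw [h1 ⟨s, by omega⟩]
          unfold zc
          rw [dif_pos (by omega : s < τ + 1)]
        have hu : (fun j' => Up f0 f G j' s ω) = uc k s := by
          funext j'
          rw [h3 ⟨s, hsτ⟩ j']
          unfold uc
          rw [dif_pos hsτ]
        rw [hz, hu, Wat_eq_Wc]
    refine ⟨?_, ?_, ?_, ?_⟩
    · exact h1 0
    · intro s
      have hZs : Zp f0 f G ((s : ℕ) + 1) ω = k.1 s.succ := by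
        have := h1 s.succ
        simpa using this
      rw [← hZs, Zp_succ]
      have hz : Zp f0 f G (s : ℕ) ω = zc k (s : ℕ) := by
        rw [h1 ⟨(s : ℕ), by omega⟩]
        unfold zc
        rw [dif_pos (by omega : (s : ℕ) < τ + 1)]
      have hu : (fun j' => Up f0 f G j' (s : ℕ) ω) = uc k (s : ℕ) := by
        funext j'
        rw [h3 ⟨(s : ℕ), s.isLt⟩ j']
        unfold uc
        rw [dif_pos s.isLt]
      rw [hz, hu, W0at_eq_Wc0]
    · intro j s
      rw [← h3 s j, Up_eq]
      congr 1
      · funext p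
        rw [h1 ⟨(p : ℕ), by omega⟩]
        unfold zc
        rw [dif_pos (by omega : (p : ℕ) < τ + 1)]
      · funext p
        exact (hforced j (p : ℕ) (by omega)).symm
      · funext p j'
        rw [h3 ⟨(p : ℕ), by omega⟩ j']
        unfold uc
        rw [dif_pos (by omega : (p : ℕ) < τ)]
    · intro s
      rw [← hforced i (s : ℕ) (by omega)]
      exact h2 s
  · rintro ⟨h1, h2, h3, h4⟩
    -- show the realized histories match the targets, by induction
    have main : ∀ t : ℕ, ∀ s ≤ t,
        (s ≤ τ → Zp f0 f G s ω = zc k s ∧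
          ∀ j, Xp f0 f G j s ω = fh f j k (ω.2.1 j) (ω.2.2.2 j) s) ∧
        (s < τ → ∀ j, Up f0 f G j s ω = uc k s j) := by
      intro t
      induction t with
      | zero =>
        intro s hs
        have hs0 : s = 0 := Nat.le_zero.mp hs
        subst hs0
        have hz0 : Zp f0 f G 0 ω = zc k 0 := by
          show ω.1 = zc k 0
          rw [h1]
          unfold zc
          rw [dif_pos (by omega : 0 < τ + 1)]
          rfl
        refine ⟨fun _ => ⟨hz0, fun j => rfl⟩, ?_⟩
        intro h0τ j
        have hUeq := Up_eq f0 f G j 0 ω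
        rw [hUeq]
        have e1 : (fun p : Fin 1 => Zp f0 f G (p : ℕ) ω) = fun p : Fin 1 => zc k (p : ℕ) := by
          funext p
          have hp : (p : ℕ) = 0 := by omega
          rw [hp]; exact hz0
        have e2 : (fun p : Fin 1 => Xp f0 f G j (p : ℕ) ω)
            = fun p : Fin 1 => fh f j k (ω.2.1 j) (ω.2.2.2 j) (p : ℕ) := by
          funext p
          have hp : (p : ℕ) = 0 := by omega
          rw [hp]; rfl
        have e3 : (fun (p : Fin 0) (j' : Fin n) => Up f0 f G j' (p : ℕ) ω)
            = fun (p : Fin 0) (j' : Fin n) => uc k (p : ℕ) j' := by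
          funext p; exact p.elim0
        rw [e1, e2]
        have e3' : (fun (p : Fin 0) => fun j' => Up f0 f G j' (p : ℕ) ω)
            = fun (p : Fin 0) => uc k (p : ℕ) := by
          funext p; exact p.elim0
        rw [e3']
        have := h3 j ⟨0, h0τ⟩
        rw [this]
        unfold uc
        rw [dif_pos h0τ]
      | succ t iht =>
        intro s hs
        rcases Nat.lt_or_ge s (t+1) with h | h
        · exact iht s (by omega)
        have hst : s = t + 1 := by omega
        subst hst
        have part1 : t + 1 ≤ τ → Zp f0 f G (t+1) ω = zc k (t+1) ∧
            ∀ j, Xp f0 f G j (t+1) ω = fh f j k (ω.2.1 j) (ω.2.2.2 j) (t+1) := by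
          intro hτ
          have hzt := ((iht t le_rfl).1 (by omega)).1
          have hxt := ((iht t le_rfl).1 (by omega)).2
          have hut : (fun j' => Up f0 f G j' t ω) = uc k t := by
            funext j'
            exact (iht t le_rfl).2 (by omega) j'
          constructor
          · rw [Zp_succ, hzt, hut, W0at_eq_Wc0]
            have := h2 ⟨t, by omega⟩
            rw [this]
            unfold zc
            rw [dif_pos (by omega : t + 1 < τ + 1)]
            rfl
          · intro j
            rw [Xp_succ, fh, hzt, hxt j, hut, Wat_eq_Wc]
        refine ⟨part1, ?_⟩
        intro hτ j
        have hUeq := Up_eq f0 f G j (t+1) ω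
        rw [hUeq]
        have hzle : ∀ p ≤ t + 1, Zp f0 f G p ω = zc k p := by
          intro p hp
          rcases Nat.lt_or_ge p (t+1) with h' | h'
          · exact ((iht p (by omega)).1 (by omega)).1
          · have : p = t + 1 := by omega
            subst this
            exact (part1 (by omega)).1
        have hxle : ∀ p ≤ t + 1, Xp f0 f G j p ω = fh f j k (ω.2.1 j) (ω.2.2.2 j) p := by
          intro p hp
          rcases Nat.lt_or_ge p (t+1) with h' | h'
          · exact ((iht p (by omega)).1 (by omega)).2 j
          · have : p = t + 1 := by omega
            subst this
            exact (part1 (by omega)).2 j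
        have e1 : (fun p : Fin (t+2) => Zp f0 f G (p : ℕ) ω)
            = fun p : Fin (t+2) => zc k (p : ℕ) := by
          funext p; exact hzle (p : ℕ) (by omega)
        have e2 : (fun p : Fin (t+2) => Xp f0 f G j (p : ℕ) ω)
            = fun p : Fin (t+2) => fh f j k (ω.2.1 j) (ω.2.2.2 j) (p : ℕ) := by
          funext p; exact hxle (p : ℕ) (by omega)
        have e3 : (fun (p : Fin (t+1)) => fun j' => Up f0 f G j' (p : ℕ) ω)
            = fun (p : Fin (t+1)) => uc k (p : ℕ) := by
          funext p j'
          exact (iht (p : ℕ) (by omega)).2 (by omega) j'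
        rw [e1, e2, e3]
        have := h3 j ⟨t+1, hτ⟩
        rw [this]
        unfold uc
        rw [dif_pos hτ]
    refine ⟨?_, ?_, ?_⟩
    · intro s
      have := (main (s : ℕ) (s : ℕ) le_rfl).1 (by omega)
      rw [this.1]
      unfold zc
      rw [dif_pos (by omega : (s : ℕ) < τ + 1)]
    · intro s
      have := (main (s : ℕ) (s : ℕ) le_rfl).1 (by omega)
      rw [(this.2 i)]
      exact h4 s
    · intro s j
      have := (main (s : ℕ) (s : ℕ) le_rfl).2 (by omega) j
      rw [this]
      unfold uc
      rw [dif_pos (by omega : (s : ℕ) < τ)]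

/-- The forced history up to time `τ` only depends on the noises before `τ`. -/
lemma fh_congr (j : Fin n) (k : KeyT Z X U i τ) (x1 : X j) (w w' : Fin T → W j)
    (hw : ∀ p : Fin T, (p : ℕ) < τ → w p = w' p) :
    ∀ s ≤ τ, fh f j k x1 w s = fh f j k x1 w' s := by
  intro s
  induction s with
  | zero => intro _; rfl
  | succ s ihs =>
    intro hs
    rw [fh, fh, ihs (by omega)]
    have : Wc j w s = Wc j w' s := by
      unfold Wc
      by_cases h : s < T
      · rw [dif_pos h, dif_pos h]; exact hw ⟨s, h⟩ (by show s < τ; omega)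
      · rw [dif_neg h, dif_neg h]
    rw [this]

lemma chiU_congr (G : Strategy Z X U) (j : Fin n) (k : KeyT Z X U i τ) (x1 : X j)
    (w w' : Fin T → W j) (hw : ∀ p : Fin T, (p : ℕ) < τ → w p = w' p) :
    chiU f G j k x1 w ↔ chiU f G j k x1 w' := by
  unfold chiU
  have e : ∀ s : Fin τ, (fun p : Fin ((s : ℕ)+1) => fh f j k x1 w (p : ℕ))
      = fun p : Fin ((s : ℕ)+1) => fh f j k x1 w' (p : ℕ) := by
    intro s; funext p
    exact fh_congr f j k x1 w w' hw (p : ℕ) (by omega)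
  constructor
  · intro h s; rw [← e s]; exact h s
  · intro h s; rw [e s]; exact h s

lemma chiX_congr (k : KeyT Z X U i τ) (x1 : X i) (w w' : Fin T → W i)
    (hw : ∀ p : Fin T, (p : ℕ) < τ → w p = w' p) :
    chiX f k x1 w ↔ chiX f k x1 w' := by
  unfold chiX
  constructor
  · intro h s; rw [← fh_congr f i k x1 w w' hw (s : ℕ) (by omega)]; exact h s
  · intro h s; rw [fh_congr f i k x1 w w' hw (s : ℕ) (by omega)]; exact h s

end Aux5
section Aux6
set_option linter.unusedSectionVars false
set_option maxHeartbeats 1000000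

variable {n T : ℕ}
variable {Z : Type} [Fintype Z] [Nonempty Z]
variable {X : Fin n → Type} [∀ i, Fintype (X i)] [∀ i, Nonempty (X i)]
variable {U : Fin n → Type} [∀ i, Fintype (U i)] [∀ i, Nonempty (U i)]
variable {W0 : Type} [Fintype W0] [Nonempty W0]
variable {W : Fin n → Type} [∀ i, Fintype (W i)] [∀ i, Nonempty (W i)]
variable (f0 : ℕ → Z → (∀ j, U j) → W0 → Z)
variable (f : ∀ i, ℕ → Z → X i → (∀ j, U j) → W i → X i)
variable (PZ : Z → ℝ) (PX : ∀ i, Z → X i → ℝ) (PW0 : W0 → ℝ) (PW : ∀ i, W i → ℝ)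
variable (c : ℕ → Z → (∀ i, X i) → (∀ i, U i) → ℝ)

/-- Total realized cost. -/
noncomputable def costSum (G : Strategy Z X U) (ω : Omega T Z X W0 W) : ℝ :=
  ∑ t ∈ Finset.range T,
    c t (Zp f0 f G t ω) (fun j => Xp f0 f G j t ω) (fun j => Up f0 f G j t ω)

lemma J_eq_costSum (G : Strategy Z X U) (μ : Omega T Z X W0 W → ℝ) :
    J f0 f c μ G = ∑ ω : Omega T Z X W0 W, μ ω * costSum f0 f c G ω := rfl

/-- Replace the law of station `i` at time `τ`. -/
noncomputable def replaceLaw (G : Strategy Z X U) (i : Fin n) (τ : ℕ)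
    (L : (Fin (τ+1) → Z) → (Fin (τ+1) → X i) → (Fin τ → ∀ j, U j) → U i) :
    Strategy Z X U :=
  Function.update G i (Function.update (G i) τ L)

lemma replaceLaw_same (G : Strategy Z X U) (i : Fin n) (τ : ℕ) (L) :
    replaceLaw G i τ L i τ = L := by
  unfold replaceLaw
  erw [Function.update_self, Function.update_self]

lemma replaceLaw_ne_j (G : Strategy Z X U) (i : Fin n) (τ : ℕ) (L) (j : Fin n) (hj : j ≠ i)
    (t : ℕ) : replaceLaw G i τ L j t = G j t := by
  unfold replaceLaw
  erw [Function.update_of_ne hj]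

lemma replaceLaw_ne_t (G : Strategy Z X U) (i : Fin n) (τ : ℕ) (L) (t : ℕ) (ht : t ≠ τ) :
    replaceLaw G i τ L i t = G i t := by
  unfold replaceLaw
  erw [Function.update_self, Function.update_of_ne ht]

lemma replaceLaw_off (G : Strategy Z X U) (i : Fin n) (τ : ℕ) (L) (j : Fin n) (t : ℕ)
    (h : ¬(j = i ∧ t = τ)) : replaceLaw G i τ L j t = G j t := by
  by_cases hj : j = i
  · subst hj
    exact replaceLaw_ne_t G j τ L t (fun ht => h ⟨rfl, ht⟩)
  · exact replaceLaw_ne_j G i τ L j hj t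

lemma replaceLaw_replaceLaw (G : Strategy Z X U) (i : Fin n) (τ : ℕ) (L L') :
    replaceLaw (replaceLaw G i τ L) i τ L' = replaceLaw G i τ L' := by
  unfold replaceLaw
  erw [Function.update_idem, Function.update_self, Function.update_idem]

variable {i : Fin n} {τ : ℕ}

/-- Cost with intervention `a` at `(i, τ)`. -/
noncomputable def Dint (G : Strategy Z X U) (i : Fin n) (τ : ℕ) (ω : Omega T Z X W0 W)
    (a : U i) : ℝ :=
  costSum f0 f c (replaceLaw G i τ (fun _ _ _ => a)) ω

/-- The `Q`-value of intervention `a` on the cell `{key = k}`. -/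
noncomputable def Qv (G : Strategy Z X U) (μ : Omega T Z X W0 W → ℝ) (k : KeyT Z X U i τ)
    (a : U i) : ℝ :=
  ∑ ω : Omega T Z X W0 W,
    if key f0 f G i τ ω = k then μ ω * Dint f0 f c G i τ ω a else 0

/-- Weight of station-`i` primitive randomness. -/
noncomputable def miw (k : KeyT Z X U i τ) (yv : X i × (Fin T → W i)) : ℝ :=
  PX i (k.1 0) yv.1 * ∏ t, PW i (yv.2 t)

/-- Station-`i` consistency condition. -/
def chiI (G : Strategy Z X U) (k : KeyT Z X U i τ) (yv : X i × (Fin T → W i)) : Prop :=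
  chiX f k yv.1 yv.2 ∧ chiU f G i k yv.1 yv.2

/-- Mass of station-`i` randomness compatible with the cell `k`. -/
noncomputable def Miw (G : Strategy Z X U) (k : KeyT Z X U i τ) : ℝ :=
  ∑ yv : X i × (Fin T → W i), if chiI f G k yv then miw PX PW k yv else 0

lemma weight_nonneg (hPZ : IsLaw PZ) (hPX : ∀ i z, IsLaw (PX i z))
    (hPW0 : IsLaw PW0) (hPW : ∀ i, IsLaw (PW i)) (ω : Omega T Z X W0 W) :
    0 ≤ weight (T := T) PZ PX PW0 PW ω := by
  unfold weight
  have h1 : (0:ℝ) ≤ PZ ω.1 := hPZ.1 _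
  have h2 : (0:ℝ) ≤ ∏ j, PX j ω.1 (ω.2.1 j) :=
    Finset.prod_nonneg fun j _ => (hPX j ω.1).1 _
  have h3 : (0:ℝ) ≤ ∏ t, PW0 (ω.2.2.1 t) := Finset.prod_nonneg fun t _ => hPW0.1 _
  have h4 : (0:ℝ) ≤ ∏ j, ∏ t, PW j (ω.2.2.2 j t) :=
    Finset.prod_nonneg fun j _ => Finset.prod_nonneg fun t _ => (hPW j).1 _
  positivity

lemma miw_nonneg (hPX : ∀ i z, IsLaw (PX i z)) (hPW : ∀ i, IsLaw (PW i))
    (k : KeyT Z X U i τ) (yv : X i × (Fin T → W i)) : 0 ≤ miw PX PW k yv := by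
  unfold miw
  have h1 : (0:ℝ) ≤ PX i (k.1 0) yv.1 := (hPX i _).1 _
  have h2 : (0:ℝ) ≤ ∏ t, PW i (yv.2 t) := Finset.prod_nonneg fun t _ => (hPW i).1 _
  positivity

lemma Miw_nonneg (hPX : ∀ i z, IsLaw (PX i z)) (hPW : ∀ i, IsLaw (PW i))
    (G : Strategy Z X U) (k : KeyT Z X U i τ) : 0 ≤ Miw (T := T) f PX PW G k := by
  apply Finset.sum_nonneg
  intro yv _
  by_cases h : chiI f G k yv
  · rw [if_pos h]; exact miw_nonneg PX PW hPX hPW k yv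
  · rw [if_neg h]

/-- If the station-`i` compatible mass vanishes, the whole cell has measure zero. -/
lemma weight_eq_zero_of_Miw (hPZ : IsLaw PZ) (hPX : ∀ i z, IsLaw (PX i z))
    (hPW0 : IsLaw PW0) (hPW : ∀ i, IsLaw (PW i)) (G : Strategy Z X U)
    (k : KeyT Z X U i τ) (hMi : Miw (T := T) f PX PW G k = 0) (ω : Omega T Z X W0 W)
    (hω : key f0 f G i τ ω = k) : weight (T := T) PZ PX PW0 PW ω = 0 := by
  rcases (key_eq_iff f0 f G ω k).mp hω with ⟨hz1, _, hU, hX⟩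
  have hchi : chiI f G k (ω.2.1 i, ω.2.2.2 i) := ⟨hX, hU i⟩
  -- the term of `Miw` at `(ω.2.1 i, ω.2.2.2 i)` is `miw`, which must vanish
  have hle : miw PX PW k (ω.2.1 i, ω.2.2.2 i) ≤ Miw (T := T) f PX PW G k := by
    have := Finset.single_le_sum (f := fun yv : X i × (Fin T → W i) =>
        if chiI f G k yv then miw PX PW k yv else 0)
      (fun yv _ => by
        by_cases h : chiI f G k yv
        · simp only [if_pos h]; exact miw_nonneg PX PW hPX hPW k yv
        · simp only [if_neg h]; exact le_rfl)
      (Finset.mem_univ (ω.2.1 i, ω.2.2.2 i))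
    simp only [if_pos hchi] at this; exact this
  have hmiw0 : miw PX PW k (ω.2.1 i, ω.2.2.2 i) = 0 :=
    le_antisymm (hMi ▸ hle) (miw_nonneg PX PW hPX hPW k _)
  unfold miw at hmiw0
  unfold weight
  rcases mul_eq_zero.mp hmiw0 with h | h
  · -- PX i (k.1 0) (ω.2.1 i) = 0
    have : PX i ω.1 (ω.2.1 i) = 0 := by rw [hz1]; exact h
    have hprod : (∏ j, PX j ω.1 (ω.2.1 j)) = 0 :=
      Finset.prod_eq_zero (Finset.mem_univ i) this
    rw [hprod]; ring
  · -- ∏ t, PW i (ω.2.2.2 i t) = 0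
    have hprod : (∏ j, ∏ t, PW j (ω.2.2.2 j t)) = 0 :=
      Finset.prod_eq_zero (Finset.mem_univ i) h
    rw [hprod]; ring

lemma Qv_eq_zero (hPZ : IsLaw PZ) (hPX : ∀ i z, IsLaw (PX i z))
    (hPW0 : IsLaw PW0) (hPW : ∀ i, IsLaw (PW i)) (G : Strategy Z X U)
    (k : KeyT Z X U i τ) (hMi : Miw (T := T) f PX PW G k = 0) (a : U i) :
    Qv f0 f c G (weight (T := T) PZ PX PW0 PW) k a = 0 := by
  unfold Qv
  apply Finset.sum_eq_zero
  intro ω _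
  by_cases h : key f0 f G i τ ω = k
  · rw [if_pos h,
      weight_eq_zero_of_Miw f0 f PZ PX PW0 PW hPZ hPX hPW0 hPW G k hMi ω h]
    ring
  · rw [if_neg h]

end Aux6
section Aux7
set_option linter.unusedSectionVars false
set_option maxHeartbeats 1000000

variable {n T : ℕ}
variable {Z : Type} [Fintype Z] [Nonempty Z]
variable {X : Fin n → Type} [∀ i, Fintype (X i)] [∀ i, Nonempty (X i)]
variable {U : Fin n → Type} [∀ i, Fintype (U i)] [∀ i, Nonempty (U i)]
variable {W0 : Type} [Fintype W0] [Nonempty W0]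
variable {W : Fin n → Type} [∀ i, Fintype (W i)] [∀ i, Nonempty (W i)]
variable (f0 : ℕ → Z → (∀ j, U j) → W0 → Z)
variable (f : ∀ i, ℕ → Z → X i → (∀ j, U j) → W i → X i)
variable (PZ : Z → ℝ) (PX : ∀ i, Z → X i → ℝ) (PW0 : W0 → ℝ) (PW : ∀ i, W i → ℝ)
variable (c : ℕ → Z → (∀ i, X i) → (∀ i, U i) → ℝ)
variable {i : Fin n} {τ : ℕ}

/-- Swap station `i`'s initial state and pre-`τ` noises of `ω` with `(y, v)`: the sample point. -/
noncomputable def swapOm (i : Fin n) (τ : ℕ) (ω : Omega T Z X W0 W)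
    (yv : X i × (Fin T → W i)) : Omega T Z X W0 W :=
  ⟨ω.1, Function.update ω.2.1 i yv.1, ω.2.2.1,
    Function.update ω.2.2.2 i (fun t => if (t : ℕ) < τ then yv.2 t else ω.2.2.2 i t)⟩

/-- Swap: the station-`i` randomness side. -/
noncomputable def swapYV (i : Fin n) (τ : ℕ) (ω : Omega T Z X W0 W)
    (yv : X i × (Fin T → W i)) : X i × (Fin T → W i) :=
  (ω.2.1 i, fun t => if (t : ℕ) < τ then ω.2.2.2 i t else yv.2 t)

lemma swap_involutive (ω : Omega T Z X W0 W) (yv : X i × (Fin T → W i)) :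
    swapOm i τ (swapOm i τ ω yv) (swapYV i τ ω yv) = ω ∧
    swapYV i τ (swapOm i τ ω yv) (swapYV i τ ω yv) = yv := by
  unfold swapOm swapYV
  simp only [Function.update_self]
  constructor
  · refine Prod.ext rfl (Prod.ext ?_ (Prod.ext rfl ?_))
    · simp only []
      rw [Function.update_idem, Function.update_eq_self]
    · simp only []
      rw [Function.update_idem]
      have : (fun t : Fin T => if (t : ℕ) < τ then
          (if (t : ℕ) < τ then ω.2.2.2 i t else yv.2 t)
          else (if (t : ℕ) < τ then yv.2 t else ω.2.2.2 i t)) = ω.2.2.2 i := by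
        funext t
        by_cases h : (t : ℕ) < τ
        · rw [if_pos h, if_pos h]
        · rw [if_neg h, if_neg h]
      rw [this, Function.update_eq_self]
  · refine Prod.ext rfl ?_
    simp only []
    funext t
    by_cases h : (t : ℕ) < τ
    · rw [if_pos h, if_pos h]
    · rw [if_neg h, if_neg h]

lemma zc_congr {k k' : KeyT Z X U i τ} (hzz : k.1 = k'.1) : zc k = zc k' := by
  funext t
  unfold zc
  rw [hzz]

lemma uc_congr {k k' : KeyT Z X U i τ} (huu : k.2.2 = k'.2.2) : uc k = uc k' := by
  funext t
  unfold uc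
  rw [huu]

lemma fh_congr_k {k k' : KeyT Z X U i τ} (hzz : k.1 = k'.1) (huu : k.2.2 = k'.2.2)
    (j : Fin n) (x1 : X j) (w : Fin T → W j) :
    fh f j k x1 w = fh f j k' x1 w := by
  funext t
  induction t with
  | zero => rfl
  | succ t ih =>
    show fh f j k x1 w (t+1) = fh f j k' x1 w (t+1)
    rw [fh, fh, ih, zc_congr hzz, uc_congr huu]

lemma chi0_congr_k {k k' : KeyT Z X U i τ} (hzz : k.1 = k'.1) (huu : k.2.2 = k'.2.2)
    (w0 : Fin T → W0) : chi0 f0 k w0 ↔ chi0 f0 k' w0 := by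
  unfold chi0
  rw [zc_congr hzz, uc_congr huu, hzz]

lemma chiU_congr_k (G : Strategy Z X U) {k k' : KeyT Z X U i τ} (hzz : k.1 = k'.1)
    (huu : k.2.2 = k'.2.2) (j : Fin n) (x1 : X j) (w : Fin T → W j) :
    chiU f G j k x1 w ↔ chiU f G j k' x1 w := by
  unfold chiU
  rw [zc_congr hzz, uc_congr huu, fh_congr_k f hzz huu, huu]

/-- Transport of the event conditions under the swap. -/
lemma swap_event (G : Strategy Z X U) (k k' : KeyT Z X U i τ) (hzz : k.1 = k'.1)
    (huu : k.2.2 = k'.2.2) (ω : Omega T Z X W0 W) (yv : X i × (Fin T → W i))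
    (hω : key f0 f G i τ ω = k) (hyv : chiI f G k' yv) :
    key f0 f G i τ (swapOm i τ ω yv) = k' ∧ chiI f G k (swapYV i τ ω yv) := by
  rcases (key_eq_iff f0 f G ω k).mp hω with ⟨hz1, h0, hU, hX⟩
  have hmix1 : ∀ p : Fin T, (p : ℕ) < τ →
      yv.2 p = (fun t : Fin T => if (t : ℕ) < τ then yv.2 t else ω.2.2.2 i t) p := by
    intro p hp; simp only [if_pos hp]
  have hmix2 : ∀ p : Fin T, (p : ℕ) < τ →
      ω.2.2.2 i p = (fun t : Fin T => if (t : ℕ) < τ then ω.2.2.2 i t else yv.2 t) p := by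
    intro p hp; simp only [if_pos hp]
  constructor
  · rw [key_eq_iff]
    refine ⟨?_, ?_, ?_, ?_⟩
    · show ω.1 = k'.1 0
      rw [← hzz]; exact hz1
    · show chi0 f0 k' ω.2.2.1
      exact (chi0_congr_k f0 hzz huu ω.2.2.1).mp h0
    · intro j
      by_cases hj : j = i
      · subst hj
        show chiU f G j k' ((Function.update ω.2.1 j yv.1) j) _
        rw [Function.update_self]
        have : chiU f G j k' yv.1 yv.2 := hyv.2
        have h2 := (chiU_congr f G j k' yv.1 yv.2 _ hmix1).mp this
        show chiU f G j k' yv.1 ((Function.update ω.2.2.2 j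
          (fun t => if (t : ℕ) < τ then yv.2 t else ω.2.2.2 j t)) j)
        rw [Function.update_self]
        exact h2
      · show chiU f G j k' ((Function.update ω.2.1 i yv.1) j)
          ((Function.update ω.2.2.2 i _) j)
        rw [Function.update_of_ne hj, Function.update_of_ne hj]
        exact (chiU_congr_k f G hzz huu j _ _).mp (hU j)
    · show chiX f k' ((Function.update ω.2.1 i yv.1) i) ((Function.update ω.2.2.2 i _) i)
      rw [Function.update_self, Function.update_self]
      exact (chiX_congr f k' yv.1 yv.2 _ hmix1).mp hyv.1
  · constructor
    · show chiX f k (swapYV i τ ω yv).1 (swapYV i τ ω yv).2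
      exact (chiX_congr f k (ω.2.1 i) (ω.2.2.2 i) _ hmix2).mp hX
    · exact (chiU_congr f G i k (ω.2.1 i) (ω.2.2.2 i) _ hmix2).mp (hU i)

/-- The combined weight is invariant under the swap. -/
lemma swap_weight (k k' : KeyT Z X U i τ) (hzz : k.1 = k'.1)
    (ω : Omega T Z X W0 W) (yv : X i × (Fin T → W i)) (hz1 : ω.1 = k.1 0) :
    miw PX PW k' yv * weight (T := T) PZ PX PW0 PW ω =
      miw PX PW k (swapYV i τ ω yv) * weight (T := T) PZ PX PW0 PW (swapOm i τ ω yv) := by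
  unfold miw weight swapOm swapYV
  simp only []
  -- split products at i
  have e1 : (∏ j, PX j ω.1 (ω.2.1 j))
      = PX i ω.1 (ω.2.1 i) * ∏ j ∈ Finset.univ.erase i, PX j ω.1 (ω.2.1 j) :=
    (Finset.mul_prod_erase Finset.univ _ (Finset.mem_univ i)).symm
  have e2 : (∏ j, PX j ω.1 (Function.update ω.2.1 i yv.1 j))
      = PX i ω.1 yv.1 * ∏ j ∈ Finset.univ.erase i, PX j ω.1 (ω.2.1 j) := by
    rw [← Finset.mul_prod_erase Finset.univ _ (Finset.mem_univ i), Function.update_self]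
    congr 1
    apply Finset.prod_congr rfl
    intro j hj
    rw [Function.update_of_ne (Finset.mem_erase.mp hj).1]
  have e3 : (∏ j, ∏ t, PW j (ω.2.2.2 j t))
      = (∏ t, PW i (ω.2.2.2 i t)) * ∏ j ∈ Finset.univ.erase i, ∏ t, PW j (ω.2.2.2 j t) :=
    (Finset.mul_prod_erase Finset.univ _ (Finset.mem_univ i)).symm
  have e4 : (∏ j, ∏ t, PW j (Function.update ω.2.2.2 i
        (fun t => if (t : ℕ) < τ then yv.2 t else ω.2.2.2 i t) j t))
      = (∏ t : Fin T, PW i (if (t : ℕ) < τ then yv.2 t else ω.2.2.2 i t)) *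
          ∏ j ∈ Finset.univ.erase i, ∏ t, PW j (ω.2.2.2 j t) := by
    rw [← Finset.mul_prod_erase Finset.univ _ (Finset.mem_univ i), Function.update_self]
    congr 1
    apply Finset.prod_congr rfl
    intro j hj
    rw [Function.update_of_ne (Finset.mem_erase.mp hj).1]
  rw [e1, e2, e3, e4]
  -- noise-product exchange
  have e5 : (∏ t, PW i (yv.2 t)) * (∏ t, PW i (ω.2.2.2 i t))
      = (∏ t : Fin T, PW i (if (t : ℕ) < τ then ω.2.2.2 i t else yv.2 t)) *
        (∏ t : Fin T, PW i (if (t : ℕ) < τ then yv.2 t else ω.2.2.2 i t)) := by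
    rw [← Finset.prod_mul_distrib, ← Finset.prod_mul_distrib]
    apply Finset.prod_congr rfl
    intro t _
    by_cases ht : (t : ℕ) < τ
    · rw [if_pos ht, if_pos ht]; ring
    · rw [if_neg ht, if_neg ht]
  -- initial-state exchange
  have e6 : PX i (k'.1 0) yv.1 * PX i ω.1 (ω.2.1 i)
      = PX i (k.1 0) (ω.2.1 i) * PX i ω.1 yv.1 := by
    rw [← hzz, hz1]; ring
  -- assemble
  have lhs : PX i (k'.1 0) yv.1 * (∏ t, PW i (yv.2 t)) *
      (PZ ω.1 * (PX i ω.1 (ω.2.1 i) * ∏ j ∈ Finset.univ.erase i, PX j ω.1 (ω.2.1 j)) *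
        (∏ t, PW0 (ω.2.2.1 t)) *
        ((∏ t, PW i (ω.2.2.2 i t)) * ∏ j ∈ Finset.univ.erase i, ∏ t, PW j (ω.2.2.2 j t)))
      = (PX i (k'.1 0) yv.1 * PX i ω.1 (ω.2.1 i)) *
        ((∏ t, PW i (yv.2 t)) * (∏ t, PW i (ω.2.2.2 i t))) *
        (PZ ω.1 * (∏ j ∈ Finset.univ.erase i, PX j ω.1 (ω.2.1 j)) *
          (∏ t, PW0 (ω.2.2.1 t)) * (∏ j ∈ Finset.univ.erase i, ∏ t, PW j (ω.2.2.2 j t))) := by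
    ring
  rw [lhs, e5, e6]
  ring

end Aux7
section Aux8
set_option linter.unusedSectionVars false
set_option maxHeartbeats 1000000

variable {n T : ℕ}
variable {Z : Type} [Fintype Z] [Nonempty Z]
variable {X : Fin n → Type} [∀ i, Fintype (X i)] [∀ i, Nonempty (X i)]
variable {U : Fin n → Type} [∀ i, Fintype (U i)] [∀ i, Nonempty (U i)]
variable {W0 : Type} [Fintype W0] [Nonempty W0]
variable {W : Fin n → Type} [∀ i, Fintype (W i)] [∀ i, Nonempty (W i)]
variable (f0 : ℕ → Z → (∀ j, U j) → W0 → Z)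
variable (f : ∀ i, ℕ → Z → X i → (∀ j, U j) → W i → X i)
variable (c : ℕ → Z → (∀ i, X i) → (∀ i, U i) → ℝ)
variable {i : Fin n} {τ : ℕ}

lemma swap_D (G : Strategy Z X U) (hML : ∀ s, τ < s → MLat G i s)
    (k k' : KeyT Z X U i τ) (hzz : k.1 = k'.1) (huu : k.2.2 = k'.2.2)
    (hxx : k.2.1 (Fin.last τ) = k'.2.1 (Fin.last τ))
    (ω ω' : Omega T Z X W0 W)
    (hω : key f0 f G i τ ω = k) (hω' : key f0 f G i τ ω' = k')
    (hxj : ∀ j, j ≠ i → ω.2.1 j = ω'.2.1 j)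
    (hw0 : ω.2.2.1 = ω'.2.2.1)
    (hwj : ∀ j, j ≠ i → ω.2.2.2 j = ω'.2.2.2 j)
    (hwi : ∀ p : Fin T, τ ≤ (p : ℕ) → ω.2.2.2 i p = ω'.2.2.2 i p)
    (a a' : U i) :
    Dint f0 f c G i τ ω a - Dint f0 f c G i τ ω a'
      = Dint f0 f c G i τ ω' a - Dint f0 f c G i τ ω' a' := by
  -- extract the key components
  have hkz : ∀ s : ℕ, ∀ hs : s ≤ τ, Zp f0 f G s ω = k.1 ⟨s, by omega⟩ := by
    intro s hs; rw [← hω]; rfl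
  have hkz' : ∀ s : ℕ, ∀ hs : s ≤ τ, Zp f0 f G s ω' = k'.1 ⟨s, by omega⟩ := by
    intro s hs; rw [← hω']; rfl
  have hku : ∀ s : ℕ, ∀ hs : s < τ, ∀ j, Up f0 f G j s ω = k.2.2 ⟨s, hs⟩ j := by
    intro s hs j; rw [← hω]; rfl
  have hku' : ∀ s : ℕ, ∀ hs : s < τ, ∀ j, Up f0 f G j s ω' = k'.2.2 ⟨s, hs⟩ j := by
    intro s hs j; rw [← hω']; rfl
  have hkxi : Xp f0 f G i τ ω = k.2.1 (Fin.last τ) := by rw [← hω]; rfl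
  have hkxi' : Xp f0 f G i τ ω' = k'.2.1 (Fin.last τ) := by rw [← hω']; rfl
  have master : ∀ b : U i,
      Dint f0 f c G i τ ω b - Dint f0 f c G i τ ω' b
        = ∑ t ∈ Finset.range T, (if t < τ then
            (c t (Zp f0 f G t ω) (fun j => Xp f0 f G j t ω) (fun j => Up f0 f G j t ω)
              - c t (Zp f0 f G t ω') (fun j => Xp f0 f G j t ω') (fun j => Up f0 f G j t ω'))
            else 0) := by
    intro b
    set Eb : Strategy Z X U := replaceLaw G i τ (fun _ _ _ => b) with hEb
    have hlt : ∀ (j : Fin n) (s : ℕ), s < τ → Eb j s = G j s := by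
      intro j s hs
      exact replaceLaw_off G i τ _ j s (fun h => by omega)
    -- transfer of processes from Eb to G before τ
    have hzxω := (congr_laws f0 f Eb G ω τ).1 hlt
    have hzxω' := (congr_laws f0 f Eb G ω' τ).1 hlt
    have huω : ∀ s, s < τ → ∀ j, Up f0 f Eb j s ω = Up f0 f G j s ω := by
      intro s hs j
      exact (congr_laws f0 f Eb G ω s).2 (fun j' s' hs' => hlt j' s' (by omega)) s le_rfl j
    have huω' : ∀ s, s < τ → ∀ j, Up f0 f Eb j s ω' = Up f0 f G j s ω' := by
      intro s hs j
      exact (congr_laws f0 f Eb G ω' s).2 (fun j' s' hs' => hlt j' s' (by omega)) s le_rfl j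
    -- congr_swap hypotheses
    have hml' : ∀ s, τ ≤ s → MLat Eb i s := by
      intro s hs
      rcases Nat.lt_or_ge τ s with h | h
      · intro zh xh xh' uh hl
        rw [hEb, replaceLaw_ne_t G i τ _ s (by omega)]
        exact hML s h zh xh xh' uh hl
      · have hsτ : s = τ := by omega
        subst hsτ
        intro zh xh xh' uh _
        simp only [hEb, replaceLaw_same]
    have hzpast : ∀ s, s ≤ τ → Zp f0 f Eb s ω = Zp f0 f Eb s ω' := by
      intro s hs
      rw [(hzxω s hs).1, (hzxω' s hs).1, hkz s hs, hkz' s hs, hzz]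
    have hupast : ∀ s, s < τ → ∀ j, Up f0 f Eb j s ω = Up f0 f Eb j s ω' := by
      intro s hs j
      rw [huω s hs j, huω' s hs j, hku s hs j, hku' s hs j, huu]
    have hxipast : Xp f0 f Eb i τ ω = Xp f0 f Eb i τ ω' := by
      rw [(hzxω τ le_rfl).2 i, (hzxω' τ le_rfl).2 i, hkxi, hkxi', hxx]
    have SW := congr_swap f0 f Eb i τ ω ω' hml' hxj hw0 hwj hwi hzpast hupast hxipast
    -- assemble the sums
    unfold Dint costSum
    rw [← Finset.sum_sub_distrib]
    apply Finset.sum_congr rfl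
    intro t _
    by_cases ht : t < τ
    · rw [if_pos ht]
      have hZ : Zp f0 f Eb t ω = Zp f0 f G t ω := (hzxω t (by omega)).1
      have hZ' : Zp f0 f Eb t ω' = Zp f0 f G t ω' := (hzxω' t (by omega)).1
      have hX : (fun j => Xp f0 f Eb j t ω) = fun j => Xp f0 f G j t ω :=
        funext fun j => (hzxω t (by omega)).2 j
      have hX' : (fun j => Xp f0 f Eb j t ω') = fun j => Xp f0 f G j t ω' :=
        funext fun j => (hzxω' t (by omega)).2 j
      have hU : (fun j => Up f0 f Eb j t ω) = fun j => Up f0 f G j t ω :=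
        funext fun j => huω t ht j
      have hU' : (fun j => Up f0 f Eb j t ω') = fun j => Up f0 f G j t ω' :=
        funext fun j => huω' t ht j
      rw [hZ, hZ', hX, hX', hU, hU']
    · rw [if_neg ht]
      rcases SW t t le_rfl with ⟨hZ, hXj', hXi', hU⟩
      have hX : (fun j => Xp f0 f Eb j t ω) = fun j => Xp f0 f Eb j t ω' := by
        funext j
        by_cases hj : j = i
        · subst hj; exact hXi' (by omega)
        · exact hXj' j hj
      have hUf : (fun j => Up f0 f Eb j t ω) = fun j => Up f0 f Eb j t ω' := funext hU
      rw [hZ, hX, hUf, sub_self]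
  have h1 := master a
  have h2 := master a'
  linarith

end Aux8
section Aux9
set_option linter.unusedSectionVars false
set_option maxHeartbeats 1000000

variable {n T : ℕ}
variable {Z : Type} [Fintype Z] [Nonempty Z]
variable {X : Fin n → Type} [∀ i, Fintype (X i)] [∀ i, Nonempty (X i)]
variable {U : Fin n → Type} [∀ i, Fintype (U i)] [∀ i, Nonempty (U i)]
variable {W0 : Type} [Fintype W0] [Nonempty W0]
variable {W : Fin n → Type} [∀ i, Fintype (W i)] [∀ i, Nonempty (W i)]
variable (f0 : ℕ → Z → (∀ j, U j) → W0 → Z)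
variable (f : ∀ i, ℕ → Z → X i → (∀ j, U j) → W i → X i)
variable (PZ : Z → ℝ) (PX : ∀ i, Z → X i → ℝ) (PW0 : W0 → ℝ) (PW : ∀ i, W i → ℝ)
variable (c : ℕ → Z → (∀ i, X i) → (∀ i, U i) → ℝ)
variable {i : Fin n} {τ : ℕ}

lemma Qv_sub (G : Strategy Z X U) (μ : Omega T Z X W0 W → ℝ) (k : KeyT Z X U i τ)
    (a a' : U i) :
    Qv f0 f c G μ k a - Qv f0 f c G μ k a'
      = ∑ ω : Omega T Z X W0 W, (if key f0 f G i τ ω = k then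
          μ ω * (Dint f0 f c G i τ ω a - Dint f0 f c G i τ ω a') else 0) := by
  unfold Qv
  rw [← Finset.sum_sub_distrib]
  apply Finset.sum_congr rfl
  intro ω _
  by_cases h : key f0 f G i τ ω = k
  · simp only [if_pos h]; ring
  · simp only [if_neg h]; ring

lemma prod_to_pairs (G : Strategy Z X U) (μ : Omega T Z X W0 W → ℝ)
    (k k' : KeyT Z X U i τ) (a a' : U i) :
    Miw (T := T) f PX PW G k' * (Qv f0 f c G μ k a - Qv f0 f c G μ k a')
      = ∑ p : (X i × (Fin T → W i)) × Omega T Z X W0 W,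
          (if (key f0 f G i τ p.2 = k ∧ chiI f G k' p.1) then
            miw PX PW k' p.1 * (μ p.2 *
              (Dint f0 f c G i τ p.2 a - Dint f0 f c G i τ p.2 a')) else 0) := by
  rw [Qv_sub]
  unfold Miw
  rw [Finset.sum_mul_sum]
  have step : (∑ yv : X i × (Fin T → W i), ∑ ω : Omega T Z X W0 W,
      (if chiI f G k' yv then miw PX PW k' yv else 0) *
        (if key f0 f G i τ ω = k then
          μ ω * (Dint f0 f c G i τ ω a - Dint f0 f c G i τ ω a') else 0))
      = ∑ yv : X i × (Fin T → W i), ∑ ω : Omega T Z X W0 W,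
        (fun p : (X i × (Fin T → W i)) × Omega T Z X W0 W =>
          (if (key f0 f G i τ p.2 = k ∧ chiI f G k' p.1) then
            miw PX PW k' p.1 * (μ p.2 *
              (Dint f0 f c G i τ p.2 a - Dint f0 f c G i τ p.2 a')) else 0)) (yv, ω) := by
    apply Finset.sum_congr rfl
    intro yv _
    apply Finset.sum_congr rfl
    intro ω _
    simp only []
    by_cases h1 : chiI f G k' yv
    · by_cases h2 : key f0 f G i τ ω = k
      · simp only [if_pos h1, if_pos h2, if_pos (And.intro h2 h1)]
      · simp only [if_pos h1, if_neg h2, if_neg (fun hc : _ ∧ _ => h2 hc.1)]; ring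
    · simp only [if_neg h1, if_neg (fun hc : _ ∧ _ => h1 hc.2)]; ring
  rw [step]
  exact (Fintype.sum_prod_type (f := fun p : (X i × (Fin T → W i)) × Omega T Z X W0 W =>
    (if (key f0 f G i τ p.2 = k ∧ chiI f G k' p.1) then
      miw PX PW k' p.1 * (μ p.2 *
        (Dint f0 f c G i τ p.2 a - Dint f0 f c G i τ p.2 a')) else 0))).symm

/-- Cross-symmetry: for two cells sharing the same shared-state/action histories and the same
current local state, the `Q`-increments are proportional with the compatible masses as
coefficients. -/
lemma cross (hPZ : IsLaw PZ) (hPX : ∀ i z, IsLaw (PX i z)) (hPW0 : IsLaw PW0)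
    (hPW : ∀ i, IsLaw (PW i)) (G : Strategy Z X U) (hML : ∀ s, τ < s → MLat G i s)
    (k k' : KeyT Z X U i τ) (hzz : k.1 = k'.1) (huu : k.2.2 = k'.2.2)
    (hxx : k.2.1 (Fin.last τ) = k'.2.1 (Fin.last τ)) (a a' : U i) :
    Miw (T := T) f PX PW G k' *
        (Qv f0 f c G (weight (T := T) PZ PX PW0 PW) k a -
          Qv f0 f c G (weight (T := T) PZ PX PW0 PW) k a')
      = Miw (T := T) f PX PW G k *
        (Qv f0 f c G (weight (T := T) PZ PX PW0 PW) k' a -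
          Qv f0 f c G (weight (T := T) PZ PX PW0 PW) k' a') := by
  set μ := weight (T := T) PZ PX PW0 PW with hμ
  rw [prod_to_pairs f0 f PX PW c G μ k k' a a', prod_to_pairs f0 f PX PW c G μ k' k a a']
  refine Finset.sum_nbij' (i := fun p => (swapYV i τ p.2 p.1, swapOm i τ p.2 p.1))
    (j := fun p => (swapYV i τ p.2 p.1, swapOm i τ p.2 p.1)) ?_ ?_ ?_ ?_ ?_
  · intro p _; exact Finset.mem_univ _
  · intro p _; exact Finset.mem_univ _
  · intro p _
    have h := swap_involutive (i := i) (τ := τ) p.2 p.1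
    simp only []
    exact Prod.ext h.2 h.1
  · intro p _
    have h := swap_involutive (i := i) (τ := τ) p.2 p.1
    simp only []
    exact Prod.ext h.2 h.1
  · intro p _
    by_cases hc : key f0 f G i τ p.2 = k ∧ chiI f G k' p.1
    · have hev := swap_event f0 f G k k' hzz huu p.2 p.1 hc.1 hc.2
      have hz1 : p.2.1 = k.1 0 := ((key_eq_iff f0 f G p.2 k).mp hc.1).1
      rw [if_pos hc, if_pos (And.intro hev.1 hev.2)]
      have hw := swap_weight PZ PX PW0 PW k k' hzz p.2 p.1 hz1
      have hd := swap_D f0 f c G hML k k' hzz huu hxx p.2 (swapOm i τ p.2 p.1) hc.1 hev.1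
        (fun j hj => (Function.update_of_ne hj _ _).symm) rfl
        (fun j hj => (Function.update_of_ne hj _ _).symm)
        (fun q hq => by
          show p.2.2.2.2 i q = Function.update p.2.2.2.2 i
            (fun t => if (t : ℕ) < τ then p.1.2 t else p.2.2.2.2 i t) i q
          rw [Function.update_self, if_neg (by omega)])
        a a'
      rw [← hμ] at hw
      calc miw PX PW k' p.1 * (μ p.2 * (Dint f0 f c G i τ p.2 a - Dint f0 f c G i τ p.2 a'))
          = (miw PX PW k' p.1 * μ p.2) *
            (Dint f0 f c G i τ p.2 a - Dint f0 f c G i τ p.2 a') := by ring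
        _ = (miw PX PW k (swapYV i τ p.2 p.1) * μ (swapOm i τ p.2 p.1)) *
            (Dint f0 f c G i τ (swapOm i τ p.2 p.1) a
              - Dint f0 f c G i τ (swapOm i τ p.2 p.1) a') := by rw [← hd, ← hw]
        _ = miw PX PW k (swapYV i τ p.2 p.1) * (μ (swapOm i τ p.2 p.1) *
            (Dint f0 f c G i τ (swapOm i τ p.2 p.1) a
              - Dint f0 f c G i τ (swapOm i τ p.2 p.1) a')) := by ring
    · rw [if_neg hc]
      have hc' : ¬ (key f0 f G i τ (swapOm i τ p.2 p.1) = k' ∧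
          chiI f G k (swapYV i τ p.2 p.1)) := by
        intro hcon
        have hev := swap_event f0 f G k' k hzz.symm huu.symm (swapOm i τ p.2 p.1)
          (swapYV i τ p.2 p.1) hcon.1 hcon.2
        have hinv := swap_involutive (i := i) (τ := τ) p.2 p.1
        rw [hinv.1, hinv.2] at hev
        exact hc ⟨hev.1, hev.2⟩
      rw [if_neg hc']
end Aux9
section Aux10
set_option linter.unusedSectionVars false
set_option maxHeartbeats 1000000

variable {n T : ℕ}
variable {Z : Type} [Fintype Z] [Nonempty Z]
variable {X : Fin n → Type} [∀ i, Fintype (X i)] [∀ i, Nonempty (X i)]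
variable {U : Fin n → Type} [∀ i, Fintype (U i)] [∀ i, Nonempty (U i)]
variable {W0 : Type} [Fintype W0] [Nonempty W0]
variable {W : Fin n → Type} [∀ i, Fintype (W i)] [∀ i, Nonempty (W i)]
variable (f0 : ℕ → Z → (∀ j, U j) → W0 → Z)
variable (f : ∀ i, ℕ → Z → X i → (∀ j, U j) → W i → X i)
variable (PZ : Z → ℝ) (PX : ∀ i, Z → X i → ℝ) (PW0 : W0 → ℝ) (PW : ∀ i, W i → ℝ)
variable (c : ℕ → Z → (∀ i, X i) → (∀ i, U i) → ℝ)
variable {i : Fin n} {τ : ℕ}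

lemma costSum_eq_Dint (G : Strategy Z X U) (ω : Omega T Z X W0 W) :
    costSum f0 f c G ω = Dint f0 f c G i τ ω
      (G i τ (key f0 f G i τ ω).1 (key f0 f G i τ ω).2.1 (key f0 f G i τ ω).2.2) := by
  set a : U i := G i τ (key f0 f G i τ ω).1 (key f0 f G i τ ω).2.1 (key f0 f G i τ ω).2.2
    with ha
  set H : Strategy Z X U := replaceLaw G i τ (fun _ _ _ => a) with hH
  have hpt : G i τ (fun s : Fin (τ+1) => Zp f0 f G (s : ℕ) ω)
      (fun s : Fin (τ+1) => Xp f0 f G i (s : ℕ) ω)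
      (fun (s : Fin τ) j' => Up f0 f G j' (s : ℕ) ω)
      = H i τ (fun s : Fin (τ+1) => Zp f0 f G (s : ℕ) ω)
      (fun s : Fin (τ+1) => Xp f0 f G i (s : ℕ) ω)
      (fun (s : Fin τ) j' => Up f0 f G j' (s : ℕ) ω) := by
    rw [hH, replaceLaw_same]
    rfl
  have hcp := congr_point f0 f G H i τ ω
    (fun j s hs => (replaceLaw_off G i τ _ j s hs).symm) hpt
  show costSum f0 f c G ω = costSum f0 f c H ω
  unfold costSum
  apply Finset.sum_congr rfl
  intro t _
  have h1 : Zp f0 f G t ω = Zp f0 f H t ω := ((hcp t).1 t le_rfl).1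
  have h2 : (fun j => Xp f0 f G j t ω) = fun j => Xp f0 f H j t ω :=
    funext fun j => ((hcp t).1 t le_rfl).2 j
  have h3 : (fun j => Up f0 f G j t ω) = fun j => Up f0 f H j t ω :=
    funext fun j => (hcp t).2 t le_rfl j
  rw [h1, h2, h3]

lemma J_decomp (G : Strategy Z X U) (μ : Omega T Z X W0 W → ℝ) :
    J f0 f c μ G = ∑ k : KeyT Z X U i τ,
      Qv f0 f c G μ k (G i τ k.1 k.2.1 k.2.2) := by
  rw [J_eq_costSum]
  have h1 : ∀ ω : Omega T Z X W0 W, μ ω * costSum f0 f c G ω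
      = μ ω * Dint f0 f c G i τ ω
          (G i τ (key f0 f G i τ ω).1 (key f0 f G i τ ω).2.1 (key f0 f G i τ ω).2.2) := by
    intro ω; rw [costSum_eq_Dint]
  rw [Finset.sum_congr rfl (fun ω _ => h1 ω)]
  rw [← Finset.sum_fiberwise Finset.univ (fun ω => key f0 f G i τ ω)
    (fun ω => μ ω * Dint f0 f c G i τ ω
      (G i τ (key f0 f G i τ ω).1 (key f0 f G i τ ω).2.1 (key f0 f G i τ ω).2.2))]
  apply Finset.sum_congr rfl
  intro k _
  rw [Finset.sum_filter]
  unfold Qv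
  apply Finset.sum_congr rfl
  intro ω _
  by_cases h : key f0 f G i τ ω = k
  · rw [if_pos h, if_pos h, h]
  · rw [if_neg h, if_neg h]

lemma key_congr (A B : Strategy Z X U) (hlt : ∀ (j : Fin n) (s : ℕ), s < τ → A j s = B j s)
    (ω : Omega T Z X W0 W) : key f0 f A i τ ω = key f0 f B i τ ω := by
  have h1 := (congr_laws f0 f A B ω τ).1 hlt
  refine Prod.ext ?_ (Prod.ext ?_ ?_)
  · funext s; exact (h1 (s : ℕ) (by omega)).1
  · funext s; exact (h1 (s : ℕ) (by omega)).2 i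
  · funext s j
    exact (congr_laws f0 f A B ω (s : ℕ)).2 (fun j' s' hs' => hlt j' s' (by omega))
      (s : ℕ) le_rfl j

/-- The reduced key. -/
noncomputable def khat (k : KeyT Z X U i τ) :
    (Fin (τ+1) → Z) × (Fin τ → ∀ j, U j) × X i :=
  (k.1, k.2.2, k.2.1 (Fin.last τ))

noncomputable def argminQ (G : Strategy Z X U) (μ : Omega T Z X W0 W → ℝ)
    (k₀ : KeyT Z X U i τ) : U i :=
  Classical.choose (Finset.exists_min_image Finset.univ (fun a => Qv f0 f c G μ k₀ a)
    ⟨Classical.arbitrary (U i), Finset.mem_univ _⟩)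

lemma argminQ_le (G : Strategy Z X U) (μ : Omega T Z X W0 W → ℝ) (k₀ : KeyT Z X U i τ)
    (b : U i) : Qv f0 f c G μ k₀ (argminQ f0 f c G μ k₀) ≤ Qv f0 f c G μ k₀ b := by
  have := Classical.choose_spec (Finset.exists_min_image Finset.univ
    (fun a => Qv f0 f c G μ k₀ a) ⟨Classical.arbitrary (U i), Finset.mem_univ _⟩)
  exact this.2 b (Finset.mem_univ b)

/-- One-step exchange: replace the law of station `i` at time `τ` by a memoryless one. -/
lemma exchange (hPZ : IsLaw PZ) (hPX : ∀ i z, IsLaw (PX i z)) (hPW0 : IsLaw PW0)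
    (hPW : ∀ i, IsLaw (PW i)) (G : Strategy Z X U) (hML : ∀ s, τ < s → MLat G i s) :
    ∃ G' : Strategy Z X U,
      (∀ j, j ≠ i → ∀ t, G' j t = G j t) ∧
      (∀ t, t ≠ τ → G' i t = G i t) ∧
      (∀ s, τ ≤ s → MLat G' i s) ∧
      J f0 f c (weight (T := T) PZ PX PW0 PW) G' ≤
        J f0 f c (weight (T := T) PZ PX PW0 PW) G := by
  set μ := weight (T := T) PZ PX PW0 PW with hμ
  -- the memoryless choice
  set γhat : (Fin (τ+1) → Z) × (Fin τ → ∀ j, U j) × X i → U i := fun kh =>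
    if h : ∃ k : KeyT Z X U i τ, khat (i := i) (τ := τ) k = kh ∧
        Miw (T := T) f PX PW G k ≠ 0 then
      argminQ f0 f c G μ h.choose
    else Classical.arbitrary (U i) with hγ
  have hbest : ∀ k : KeyT Z X U i τ, ∀ b : U i,
      Qv f0 f c G μ k (γhat (khat k)) ≤ Qv f0 f c G μ k b := by
    intro k b
    by_cases hMk : Miw (T := T) f PX PW G k = 0
    · rw [Qv_eq_zero f0 f PZ PX PW0 PW c hPZ hPX hPW0 hPW G k hMk,
        Qv_eq_zero f0 f PZ PX PW0 PW c hPZ hPX hPW0 hPW G k hMk]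
    · have hex : ∃ k' : KeyT Z X U i τ, khat (i := i) (τ := τ) k' = khat k ∧
          Miw (T := T) f PX PW G k' ≠ 0 := ⟨k, rfl, hMk⟩
      have hγk : γhat (khat k) = argminQ f0 f c G μ hex.choose := by
        rw [hγ]; simp only []
        rw [dif_pos hex]
      set k₀ := hex.choose with hk₀def
      have hk₀ := hex.choose_spec
      have hzz : k₀.1 = k.1 :=
        congrArg (fun q : (Fin (τ+1) → Z) × (Fin τ → ∀ j, U j) × X i => q.1) hk₀.1
      have huu : k₀.2.2 = k.2.2 :=
        congrArg (fun q : (Fin (τ+1) → Z) × (Fin τ → ∀ j, U j) × X i => q.2.1) hk₀.1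
      have hxx : k₀.2.1 (Fin.last τ) = k.2.1 (Fin.last τ) :=
        congrArg (fun q : (Fin (τ+1) → Z) × (Fin τ → ∀ j, U j) × X i => q.2.2) hk₀.1
      set b0 := argminQ f0 f c G μ k₀ with hb0
      have hcross := cross (T := T) f0 f PZ PX PW0 PW c hPZ hPX hPW0 hPW G hML k k₀
        hzz.symm huu.symm hxx.symm b0 b
      have hminle : Qv f0 f c G μ k₀ b0 - Qv f0 f c G μ k₀ b ≤ 0 := by
        have := argminQ_le f0 f c G μ k₀ b
        linarith
      have hM0pos : 0 < Miw (T := T) f PX PW G k₀ :=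
        lt_of_le_of_ne (Miw_nonneg f PX PW hPX hPW G k₀) (Ne.symm hk₀.2)
      have hMknn : 0 ≤ Miw (T := T) f PX PW G k :=
        Miw_nonneg f PX PW hPX hPW G k
      rw [hγk]
      nlinarith [hcross, hminle, hM0pos, hMknn]
  -- the improved strategy
  set G' : Strategy Z X U := replaceLaw G i τ
    (fun zh xh uh => γhat (zh, uh, xh (Fin.last τ))) with hG'
  refine ⟨G', ?_, ?_, ?_, ?_⟩
  · intro j hj t; exact replaceLaw_ne_j G i τ _ j hj t
  · intro t ht; exact replaceLaw_ne_t G i τ _ t ht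
  · intro s hs
    rcases Nat.lt_or_ge τ s with h | h
    · intro zh xh xh' uh hl
      rw [hG', replaceLaw_ne_t G i τ _ s (by omega)]
      exact hML s h zh xh xh' uh hl
    · have hsτ : s = τ := by omega
      subst hsτ
      intro zh xh xh' uh hl
      rw [hG', replaceLaw_same]
      simp only [hl]
  -- the cost comparison
  · have hQG' : ∀ (k : KeyT Z X U i τ) (b : U i),
        Qv f0 f c G' μ k b = Qv f0 f c G μ k b := by
      intro k b
      unfold Qv
      apply Finset.sum_congr rfl
      intro ω _
      have hkey : key f0 f G' i τ ω = key f0 f G i τ ω :=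
        key_congr f0 f G' G (fun j s hs => replaceLaw_off G i τ _ j s
          (fun hc => by omega)) ω
      have hD : Dint f0 f c G' i τ ω b = Dint f0 f c G i τ ω b := by
        unfold Dint
        rw [hG', replaceLaw_replaceLaw]
      rw [hkey, hD]
    have hJG : J f0 f c μ G = ∑ k : KeyT Z X U i τ,
        Qv f0 f c G μ k (G i τ k.1 k.2.1 k.2.2) := J_decomp f0 f c G μ
    have hJG' : J f0 f c μ G' = ∑ k : KeyT Z X U i τ,
        Qv f0 f c G μ k (γhat (khat k)) := by
      rw [J_decomp f0 f c G' μ]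
      apply Finset.sum_congr rfl
      intro k _
      rw [hQG']
      congr 1
      rw [hG', replaceLaw_same]
      rfl
    rw [hJG, hJG']
    apply Finset.sum_le_sum
    intro k _
    exact hbest k (G i τ k.1 k.2.1 k.2.2)

end Aux10
section Aux11
set_option linter.unusedSectionVars false
set_option maxHeartbeats 1000000

variable {n T : ℕ}
variable {Z : Type} [Fintype Z] [Nonempty Z]
variable {X : Fin n → Type} [∀ i, Fintype (X i)] [∀ i, Nonempty (X i)]
variable {U : Fin n → Type} [∀ i, Fintype (U i)] [∀ i, Nonempty (U i)]
variable {W0 : Type} [Fintype W0] [Nonempty W0]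
variable {W : Fin n → Type} [∀ i, Fintype (W i)] [∀ i, Nonempty (W i)]
variable (f0 : ℕ → Z → (∀ j, U j) → W0 → Z)
variable (f : ∀ i, ℕ → Z → X i → (∀ j, U j) → W i → X i)
variable (c : ℕ → Z → (∀ i, X i) → (∀ i, U i) → ℝ)

lemma J_congr_lt (A B : Strategy Z X U) (μ : Omega T Z X W0 W → ℝ)
    (h : ∀ (j : Fin n) (s : ℕ), s < T → A j s = B j s) :
    J f0 f c μ A = J f0 f c μ B := by
  rw [J_eq_costSum, J_eq_costSum]
  apply Finset.sum_congr rfl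
  intro ω _
  congr 1
  unfold costSum
  apply Finset.sum_congr rfl
  intro t ht
  have htT : t < T := Finset.mem_range.mp ht
  have h1 := (congr_laws f0 f A B ω T).1 (fun j s hs => h j s hs)
  have h2 := (congr_laws f0 f A B ω t).2 (fun j s hs => h j s (by omega))
  rw [(h1 t (by omega)).1]
  have hx : (fun j => Xp f0 f A j t ω) = fun j => Xp f0 f B j t ω :=
    funext fun j => (h1 t (by omega)).2 j
  have hu : (fun j => Up f0 f A j t ω) = fun j => Up f0 f B j t ω :=
    funext fun j => h2 t le_rfl j
  rw [hx, hu]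

end Aux11
/-- Lemma 2: in the full observation model, fix a station `i` and fix
arbitrarily the control strategies of all other stations (encoded by requiring `ḡ j = g j` for
`j ≠ i`). Then restricting attention at station `i` to control laws of the form
`Uⁱ_t = gⁱ_t(Xⁱ_t, Z_{1:t}, U_{1:t-1})` is without loss of optimality: there is a strategy
`ḡ` agreeing with `g` at all stations `j ≠ i`, whose `i`-th control laws do not depend on the
past local states `Xⁱ_{1:t-1}`, with `J(ḡ) ≤ J(g)`. -/
theorem full_obs_person_by_person
    (PZ : Z → ℝ) (PX : ∀ i, Z → X i → ℝ) (PW0 : W0 → ℝ) (PW : ∀ i, W i → ℝ)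
    (hPZ : IsLaw PZ) (hPX : ∀ i z, IsLaw (PX i z))
    (hPW0 : IsLaw PW0) (hPW : ∀ i, IsLaw (PW i))
    (c : ℕ → Z → (∀ i, X i) → (∀ i, U i) → ℝ)
    (i : Fin n) (g : Strategy Z X U) :
    ∃ gbar : Strategy Z X U,
      (∀ j, j ≠ i → gbar j = g j) ∧
      (∀ (t : ℕ) (zh : Fin (t + 1) → Z) (xh xh' : Fin (t + 1) → X i)
          (uh : Fin t → ∀ j, U j), xh (Fin.last t) = xh' (Fin.last t) →
            gbar i t zh xh uh = gbar i t zh xh' uh) ∧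
      J f0 f c (weight (T := T) PZ PX PW0 PW) gbar ≤
        J f0 f c (weight (T := T) PZ PX PW0 PW) g := by
  set μ := weight (T := T) PZ PX PW0 PW with hμ
  -- the tail modification: memoryless laws from time `T` on, irrelevant for the cost
  set G0 : Strategy Z X U := Function.update g i
    (fun t => if T ≤ t then (fun zh xh uh => g i t zh (fun _ => xh (Fin.last t)) uh)
      else g i t) with hG0
  have hG0off : ∀ j, j ≠ i → ∀ t, G0 j t = g j t := by
    intro j hj t
    erw [hG0, Function.update_of_ne hj]
  have hG0lt : ∀ t, t < T → G0 i t = g i t := by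
    intro t ht
    erw [hG0, Function.update_self, if_neg (by omega)]
  have hG0ml : ∀ s, T ≤ s → MLat G0 i s := by
    intro s hs zh xh xh' uh hl
    erw [hG0, Function.update_self, if_pos hs]
    simp only [hl]
  have hJG0 : J f0 f c μ G0 = J f0 f c μ g := by
    apply J_congr_lt
    intro j s hs
    by_cases hj : j = i
    · subst hj; exact hG0lt s hs
    · exact hG0off j hj s
  -- backward induction
  have main : ∀ m : ℕ, ∃ G : Strategy Z X U,
      (∀ j, j ≠ i → ∀ t, G j t = g j t) ∧ (∀ s, T - m ≤ s → MLat G i s) ∧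
      J f0 f c μ G ≤ J f0 f c μ g := by
    intro m
    induction m with
    | zero =>
      refine ⟨G0, hG0off, ?_, le_of_eq hJG0⟩
      intro s hs
      exact hG0ml s (by omega)
    | succ m ih =>
      obtain ⟨G, hoff, hML, hJ⟩ := ih
      by_cases hm : m < T
      · obtain ⟨G', h1, h2, h3, h4⟩ := exchange (T := T) f0 f PZ PX PW0 PW c
          hPZ hPX hPW0 hPW G (i := i) (τ := T - m - 1) (fun s hs => hML s (by omega))
        refine ⟨G', fun j hj t => (h1 j hj t).trans (hoff j hj t),
          fun s hs => h3 s (by omega), le_trans (by rw [← hμ] at h4; exact h4) hJ⟩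
      · exact ⟨G, hoff, fun s hs => hML s (by omega), hJ⟩
  obtain ⟨Gf, hoff, hML, hJ⟩ := main T
  refine ⟨Gf, fun j hj => funext fun t => hoff j hj t, ?_, hJ⟩
  intro t zh xh xh' uh hl
  exact hML t (by omega) zh xh xh' uh hl

end ControlSharing
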